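/- arXiv:2003.11653 — 3 statements merged into one kernel-verified Lean document; each statement's English description precedes it below -/
import Mathlib

section
/- Let m₁ and m₂ be Herglotz–Nevanlinna functions with m₁(z) = −1/m₂(z), and suppose both m₁(z)/z → 0 and m₂(z)/z → 0 as |z| → ∞ along the imaginary axis. Then for any K ∈ ℕ₀, the moments of the representing measure ρ₂ of m₂ exist up to order 2K if and only if the moments of the representing measure ρ₁ of m₁ exist up to order 2K. -/
open MeasureTheory Filter Complex

/-- A Herglotz--Nevanlinna function: analytic on `ℂ ∖ ℝ`, mapping the upper
half-plane into its closure, and symmetric under complex conjugation. -/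
def IsHerglotz (m : ℂ → ℂ) : Prop :=
  DifferentiableOn ℂ m {z : ℂ | z.im ≠ 0} ∧
  (∀ z : ℂ, 0 < z.im → 0 ≤ (m z).im) ∧
  (∀ z : ℂ, z.im ≠ 0 → m (starRingEnd ℂ z) = starRingEnd ℂ (m z))

/-- The Herglotz integral representation `m(z) = a + bz + ∫ (1/(λ-z) - λ/(1+λ²)) dρ(λ)`
with `a ∈ ℝ`, `b ≥ 0` and `ρ` a non-negative Borel measure with `∫ dρ/(1+λ²) < ∞`. -/
def HerglotzRep (m : ℂ → ℂ) (a b : ℝ) (ρ : Measure ℝ) : Prop :=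
  0 ≤ b ∧ Integrable (fun l : ℝ => 1 / (1 + l ^ 2)) ρ ∧
  ∀ z : ℂ, z.im ≠ 0 →
    m z = (a : ℂ) + (b : ℂ) * z +
      ∫ l : ℝ, (((l : ℂ) - z)⁻¹ - (l : ℂ) / (1 + (l : ℂ) ^ 2)) ∂ρ

open Finset

noncomputable section
namespace Stmt11

def zz (η : ℝ) : ℂ := Complex.I * (η : ℂ)

@[simp] lemma zz_im (η : ℝ) : (zz η).im = η := by simp [zz]
@[simp] lemma zz_re (η : ℝ) : (zz η).re = 0 := by simp [zz]

lemma zz_ne {η : ℝ} (h : 0 < η) : zz η ≠ 0 := by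
  simp [zz, Complex.ext_iff, h.ne']

lemma norm_zz {η : ℝ} (h : 0 ≤ η) : ‖zz η‖ = η := by
  rw [zz, norm_mul, Complex.norm_I, one_mul, Complex.norm_real, Real.norm_eq_abs,
    _root_.abs_of_nonneg h]

lemma eta_mul_zz_inv {η : ℝ} (h : 0 < η) : (η : ℂ) * (zz η)⁻¹ = -Complex.I := by
  have : (η:ℂ) ≠ 0 := by exact_mod_cast h.ne'
  field_simp [zz]
  rw [zz, show Complex.I * (η:ℂ) * Complex.I = Complex.I ^ 2 * η by ring, Complex.I_sq]
  ring

def g (η : ℝ) (l : ℝ) : ℂ := ((l : ℂ) - zz η)⁻¹ - (l : ℂ) / (1 + (l : ℂ) ^ 2)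

lemma sub_zz_ne {η l : ℝ} (h : 0 < η) : (l : ℂ) - zz η ≠ 0 := by
  intro hc
  have := congrArg Complex.im hc
  simp [h.ne'] at this

lemma coe_one_add_sq (l : ℝ) : (1 : ℂ) + (l : ℂ) ^ 2 = ((1 + l ^ 2 : ℝ) : ℂ) := by
  push_cast; ring

lemma one_add_sq_ne (l : ℝ) : (1 : ℂ) + (l : ℂ) ^ 2 ≠ 0 := by
  rw [coe_one_add_sq, ne_eq, Complex.ofReal_eq_zero]
  nlinarith [sq_nonneg l]

lemma norm_sub_zz_ge_eta {η l : ℝ} (h : 0 ≤ η) : η ≤ ‖(l : ℂ) - zz η‖ := by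
  have := Complex.abs_im_le_norm ((l:ℂ) - zz η)
  simp only [Complex.sub_im, zz_im, Complex.ofReal_im, zero_sub, abs_neg] at this
  exact le_trans (le_abs_self η) this

lemma norm_sub_zz_ge_abs (η l : ℝ) : |l| ≤ ‖(l : ℂ) - zz η‖ := by
  have := Complex.abs_re_le_norm ((l:ℂ) - zz η)
  simpa using this

lemma norm_inv_sub_zz_le {η l : ℝ} (h : 0 < η) : ‖((l : ℂ) - zz η)⁻¹‖ ≤ η⁻¹ := by
  rw [norm_inv]
  exact inv_anti₀ h (norm_sub_zz_ge_eta h.le)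

lemma norm_div_one_add_sq_le (l : ℝ) : ‖(l : ℂ) / (1 + (l : ℂ) ^ 2)‖ ≤ 1 := by
  rw [coe_one_add_sq, ← Complex.ofReal_div, Complex.norm_real, Real.norm_eq_abs]
  rw [abs_div, abs_of_pos (by positivity : (0:ℝ) < 1 + l^2)]
  rw [div_le_one (by positivity)]
  nlinarith [abs_nonneg l, _root_.sq_abs l, sq_nonneg (|l| - 1)]

lemma g_eq (η l : ℝ) (h : 0 < η) :
    g η l = (1 + (l : ℂ) * zz η) / (((l : ℂ) - zz η) * (1 + (l : ℂ) ^ 2)) := by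
  rw [g, inv_eq_one_div, div_sub_div _ _ (sub_zz_ne h) (one_add_sq_ne l)]
  congr 1
  ring

lemma norm_g_le {η l : ℝ} (h : 1 ≤ η) : ‖g η l‖ ≤ 2 * η * (1 / (1 + l ^ 2)) := by
  have h0 : (0:ℝ) < η := lt_of_lt_of_le one_pos h
  rw [g_eq η l h0, norm_div, norm_mul]
  have hnum : ‖1 + (l : ℂ) * zz η‖ ≤ 1 + |l| * η := by
    calc ‖1 + (l:ℂ) * zz η‖ ≤ ‖(1:ℂ)‖ + ‖(l:ℂ) * zz η‖ := norm_add_le _ _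
    _ = 1 + |l| * η := by
        rw [norm_mul, norm_zz h0.le, Complex.norm_real, Real.norm_eq_abs, norm_one]
  have hsq : ‖1 + (l : ℂ) ^ 2‖ = 1 + l ^ 2 := by
    rw [coe_one_add_sq, Complex.norm_real, Real.norm_eq_abs, abs_of_pos (by positivity)]
  rw [hsq]
  have hden : (0:ℝ) < ‖(l:ℂ) - zz η‖ := lt_of_lt_of_le h0 (norm_sub_zz_ge_eta h0.le)
  have key : ‖1 + (l : ℂ) * zz η‖ / ‖(l:ℂ) - zz η‖ ≤ 2 * η := by
    rw [div_le_iff₀ hden]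
    have h1 : 1 ≤ η * ‖(l:ℂ) - zz η‖ := by
      calc (1:ℝ) ≤ η * η := by nlinarith
      _ ≤ η * ‖(l:ℂ) - zz η‖ := by
          exact mul_le_mul_of_nonneg_left (norm_sub_zz_ge_eta h0.le) h0.le
    have h2 : |l| * η ≤ η * ‖(l:ℂ) - zz η‖ := by
      calc |l| * η ≤ ‖(l:ℂ) - zz η‖ * η :=
        mul_le_mul_of_nonneg_right (norm_sub_zz_ge_abs η l) h0.le
      _ = η * ‖(l:ℂ) - zz η‖ := mul_comm _ _
    calc ‖1 + (l : ℂ) * zz η‖ ≤ 1 + |l| * η := hnum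
    _ ≤ η * ‖(l:ℂ) - zz η‖ + η * ‖(l:ℂ) - zz η‖ := add_le_add h1 h2
    _ = 2 * η * ‖(l:ℂ) - zz η‖ := by ring
  rw [div_mul_eq_div_div, mul_one_div]
  gcongr

lemma continuous_g (η : ℝ) (h : 0 < η) : Continuous (g η) := by
  apply Continuous.sub
  · exact ((Complex.continuous_ofReal.sub continuous_const).inv₀
      (fun l => sub_zz_ne h))
  · exact Complex.continuous_ofReal.div
      (by continuity) (fun l => one_add_sq_ne l)

lemma im_g (η l : ℝ) : (g η l).im = η / (l ^ 2 + η ^ 2) := by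
  have h1 : ((l : ℂ) - zz η)⁻¹.im = η / (l^2 + η^2) := by
    rw [Complex.inv_im]
    simp only [Complex.sub_im, Complex.ofReal_im, zz_im, zero_sub, neg_neg,
      Complex.normSq_apply, Complex.sub_re, Complex.ofReal_re, zz_re, sub_zero]
    ring_nf
  have h2 : ((l:ℂ) / (1 + (l:ℂ)^2)).im = 0 := by
    have : (l:ℂ) / (1 + (l:ℂ)^2) = ((l / (1+l^2) : ℝ) : ℂ) := by push_cast; ring
    rw [this, Complex.ofReal_im]
  simp [g, Complex.sub_im, h1, h2]


/-- The Herglotz representation (copied here so the namespace is self-contained). -/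
lemma integrable_g {ρ : Measure ℝ} (hint : Integrable (fun l : ℝ => 1 / (1 + l ^ 2)) ρ)
    {η : ℝ} (h : 1 ≤ η) : Integrable (g η) ρ := by
  have h0 : (0:ℝ) < η := lt_of_lt_of_le one_pos h
  apply Integrable.mono' (hint.const_mul (2 * η))
  · exact (continuous_g η h0).aestronglyMeasurable
  · exact Filter.Eventually.of_forall fun l => by
      simpa [mul_one_div] using norm_g_le (l := l) h

lemma norm_g_le_two {η l : ℝ} (h : 1 ≤ η) : ‖g η l‖ ≤ 2 := by
  have h0 : (0:ℝ) < η := lt_of_lt_of_le one_pos h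
  have := le_trans (norm_sub_le (((l : ℂ) - zz η)⁻¹) ((l : ℂ) / (1 + (l : ℂ) ^ 2)))
    (add_le_add (le_trans (norm_inv_sub_zz_le h0)
      (by rw [inv_le_one_iff₀]; right; exact h)) (norm_div_one_add_sq_le l))
  simpa [g] using le_trans this (by norm_num)

lemma tendsto_g_div_zz (l : ℝ) :
    Tendsto (fun η : ℝ => g η l / zz η) atTop (nhds 0) := by
  apply squeeze_zero_norm' (a := fun η : ℝ => 2 * η⁻¹)
  · filter_upwards [eventually_ge_atTop (1:ℝ)] with η h
    have h0 : (0:ℝ) < η := lt_of_lt_of_le one_pos h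
    rw [norm_div, norm_zz h0.le, div_eq_mul_inv]
    exact mul_le_mul_of_nonneg_right (norm_g_le_two h) (by positivity)
  · simpa using tendsto_inv_atTop_zero.const_mul (2:ℝ)

lemma b_eq_zero {m : ℂ → ℂ} {a b : ℝ} {ρ : Measure ℝ} (hrep : HerglotzRep m a b ρ)
    (hlim : Tendsto (fun η : ℝ => m (zz η) / zz η) atTop (nhds 0)) : b = 0 := by
  obtain ⟨-, hint, hm⟩ := hrep
  have h1 : Tendsto (fun η : ℝ => (a:ℂ) * (zz η)⁻¹) atTop (nhds 0) := by
    apply squeeze_zero_norm' (a := fun η : ℝ => |a| * η⁻¹)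
    · filter_upwards [eventually_ge_atTop (1:ℝ)] with η h
      have h0 : (0:ℝ) < η := lt_of_lt_of_le one_pos h
      rw [norm_mul, norm_inv, norm_zz h0.le, Complex.norm_real, Real.norm_eq_abs]
    · simpa using tendsto_inv_atTop_zero.const_mul |a|
  have h2 : Tendsto (fun η : ℝ => ∫ l, g η l / zz η ∂ρ) atTop (nhds 0) := by
    have h0 : (0:ℂ) = ∫ (l : ℝ), (0:ℂ) ∂ρ := by simp
    rw [h0]
    apply tendsto_integral_filter_of_dominated_convergence
      (bound := fun l => 2 * (1 / (1 + l ^ 2)))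
    · filter_upwards [eventually_ge_atTop (1:ℝ)] with η h
      have h0 : (0:ℝ) < η := lt_of_lt_of_le one_pos h
      exact ((continuous_g η h0).div_const _).aestronglyMeasurable
    · filter_upwards [eventually_ge_atTop (1:ℝ)] with η h
      apply Filter.Eventually.of_forall fun l => ?_
      have h0 : (0:ℝ) < η := lt_of_lt_of_le one_pos h
      rw [norm_div, norm_zz h0.le, div_le_iff₀ h0]
      calc ‖g η l‖ ≤ 2 * η * (1 / (1 + l ^ 2)) := norm_g_le h
        _ = 2 * (1 / (1 + l^2)) * η := by ring
    · exact hint.const_mul 2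
    · exact Filter.Eventually.of_forall fun l => tendsto_g_div_zz l
  have key : Tendsto (fun η : ℝ => m (zz η) / zz η) atTop (nhds ((b:ℂ))) := by
    have hsum := (h1.add (tendsto_const_nhds (x := (b:ℂ)))).add h2
    rw [zero_add, add_zero] at hsum
    apply hsum.congr'
    filter_upwards [eventually_ge_atTop (1:ℝ)] with η h
    have h0 : (0:ℝ) < η := lt_of_lt_of_le one_pos h
    have hz : zz η ≠ 0 := zz_ne h0
    rw [hm (zz η) (by simp [h0.ne'])]
    rw [integral_div, add_div, add_div, div_eq_mul_inv (a:ℂ),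
      mul_div_assoc, div_self hz, mul_one]
    rfl
  have := tendsto_nhds_unique key hlim
  exact_mod_cast this


lemma geom_split (p : ℕ) {x z : ℂ} (hz : z ≠ 0) (hxz : x - z ≠ 0) :
    (x - z)⁻¹ = -(∑ j ∈ range p, x ^ j * (z⁻¹) ^ (j + 1)) + x ^ p * (z⁻¹) ^ p * (x - z)⁻¹ := by
  induction p with
  | zero => simp
  | succ p ih =>
    have key : x ^ p * z⁻¹ ^ p * (x - z)⁻¹
        = -(x ^ p * z⁻¹ ^ (p + 1)) + x ^ (p + 1) * z⁻¹ ^ (p + 1) * (x - z)⁻¹ := by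
      linear_combination (-(x ^ p * z⁻¹ ^ p * (x - z)⁻¹)) * mul_inv_cancel₀ hz
        + (-(x ^ p * z⁻¹ ^ (p + 1))) * mul_inv_cancel₀ hxz
    conv_lhs => rw [ih, key]
    rw [sum_range_succ]
    ring

lemma mom_one {ρ : Measure ℝ} (h : Integrable (fun l : ℝ => |l| ^ 0) ρ) :
    Integrable (fun _ : ℝ => (1 : ℝ)) ρ := by simpa using h

lemma mom_le {ρ : Measure ℝ} {q : ℕ} (hq : Integrable (fun l : ℝ => |l| ^ q) ρ)
    (h1 : Integrable (fun _ : ℝ => (1 : ℝ)) ρ) {j : ℕ} (hj : j ≤ q) :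
    Integrable (fun l : ℝ => |l| ^ j) ρ := by
  apply Integrable.mono' (h1.add hq)
  · exact (_root_.continuous_abs.pow j).aestronglyMeasurable
  · apply Filter.Eventually.of_forall fun l => ?_
    simp only [Pi.add_apply]
    rw [Real.norm_eq_abs, _root_.abs_pow, _root_.abs_abs]
    rcases le_or_gt |l| 1 with h | h
    · have h2 : |l| ^ j ≤ 1 := pow_le_one₀ (abs_nonneg l) h
      have h0 : (0:ℝ) ≤ |l| ^ q := by positivity
      linarith
    · have h2 : |l| ^ j ≤ |l| ^ q := pow_le_pow_right₀ h.le hj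
      linarith

lemma mom_pow {ρ : Measure ℝ} {j : ℕ} (h : Integrable (fun l : ℝ => |l| ^ j) ρ) :
    Integrable (fun l : ℝ => l ^ j) ρ := by
  apply Integrable.mono' h (continuous_pow j).aestronglyMeasurable
  exact Filter.Eventually.of_forall fun l => by rw [Real.norm_eq_abs, _root_.abs_pow]

lemma mom_cpow {ρ : Measure ℝ} {j : ℕ} (h : Integrable (fun l : ℝ => |l| ^ j) ρ) :
    Integrable (fun l : ℝ => ((l : ℂ)) ^ j) ρ := by
  have h2 := (mom_pow h).ofReal (𝕜 := ℂ)
  apply h2.congr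
  exact Filter.Eventually.of_forall fun l => (Complex.ofReal_pow l j)

lemma norm_pow_mul_inv_le {η : ℝ} (l : ℝ) (h : 0 < η) (p : ℕ) :
    ‖(l : ℂ) ^ (p + 1) * ((l : ℂ) - zz η)⁻¹‖ ≤ |l| ^ p := by
  rw [norm_mul, norm_pow, Complex.norm_real, Real.norm_eq_abs, norm_inv]
  rcases eq_or_ne l 0 with rfl | hl
  · simp
  · have h1 : 0 < |l| := abs_pos.mpr hl
    have h2 : ‖(l:ℂ) - zz η‖⁻¹ ≤ |l|⁻¹ := inv_anti₀ h1 (norm_sub_zz_ge_abs η l)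
    calc |l| ^ (p+1) * ‖(l:ℂ) - zz η‖⁻¹ ≤ |l| ^ (p+1) * |l|⁻¹ := by
          exact mul_le_mul_of_nonneg_left h2 (by positivity)
      _ = |l| ^ p := by rw [pow_succ]; field_simp

lemma norm_pow_mul_inv_le' {η : ℝ} (l : ℝ) (h : 0 < η) (q : ℕ) :
    ‖(l : ℂ) ^ q * ((l : ℂ) - zz η)⁻¹‖ ≤ |l| ^ q * η⁻¹ := by
  rw [norm_mul, norm_pow, Complex.norm_real, Real.norm_eq_abs]
  exact mul_le_mul_of_nonneg_left (norm_inv_sub_zz_le h) (by positivity)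

/-- coefficients in the expansion of a Herglotz function with `b = 0`. -/
def repCoeff (a : ℝ) (ρ : Measure ℝ) : ℕ → ℝ
  | 0 => a - ∫ l, l / (1 + l ^ 2) ∂ρ
  | (j + 1) => -(∫ l, l ^ j ∂ρ)

/-- remainder in the expansion -/
def repRem (ρ : Measure ℝ) (p : ℕ) (η : ℝ) : ℂ :=
  ∫ l, (l : ℂ) ^ p * ((l : ℂ) - zz η)⁻¹ ∂ρ

lemma integrable_rem {ρ : Measure ℝ} {n : ℕ}
    (hmom : Integrable (fun l : ℝ => |l| ^ (2 * n)) ρ) {η : ℝ} (h : 0 < η) :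
    Integrable (fun l : ℝ => (l : ℂ) ^ (2 * n + 1) * ((l : ℂ) - zz η)⁻¹) ρ := by
  apply Integrable.mono' hmom
  · apply Continuous.aestronglyMeasurable
    exact (Complex.continuous_ofReal.pow _).mul
      ((Complex.continuous_ofReal.sub continuous_const).inv₀ fun l => sub_zz_ne h)
  · exact Filter.Eventually.of_forall fun l => norm_pow_mul_inv_le l h (2 * n)

lemma integrable_cauchy {ρ : Measure ℝ} {n : ℕ}
    (hmom : Integrable (fun l : ℝ => |l| ^ (2 * n)) ρ) {η : ℝ} (h : 0 < η) :
    Integrable (fun l : ℝ => l ^ (2 * n + 2) / (l ^ 2 + η ^ 2)) ρ := by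
  apply Integrable.mono' hmom
  · apply Continuous.aestronglyMeasurable
    apply Continuous.div (by continuity) (by continuity)
    intro l; positivity
  · apply Filter.Eventually.of_forall fun l => ?_
    rw [Real.norm_eq_abs, abs_div, abs_of_pos (show (0:ℝ) < l ^ 2 + η ^ 2 by positivity)]
    rw [div_le_iff₀ (by positivity)]
    have h1 : |l ^ (2 * n + 2)| = |l| ^ (2 * n) * l ^ 2 := by
      rw [_root_.abs_pow, ← _root_.sq_abs l, ← pow_add]
    rw [h1]
    have h2 : (0:ℝ) ≤ |l| ^ (2 * n) := by positivity
    nlinarith [sq_nonneg η, sq_nonneg l, mul_le_mul_of_nonneg_left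
      (show l ^ 2 ≤ l ^ 2 + η ^ 2 by nlinarith [sq_nonneg η]) h2]


lemma cintegral_ofReal {ρ : Measure ℝ} {f : ℝ → ℝ} :
    ∫ l, ((f l : ℝ) : ℂ) ∂ρ = ((∫ l, f l ∂ρ : ℝ) : ℂ) :=
  integral_ofReal

lemma integral_cpow (ρ : Measure ℝ) (j : ℕ) :
    ∫ l, (l : ℂ) ^ j ∂ρ = ((∫ l, l ^ j ∂ρ : ℝ) : ℂ) := by
  calc ∫ l, (l : ℂ) ^ j ∂ρ = ∫ l, ((l ^ j : ℝ) : ℂ) ∂ρ := by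
        apply integral_congr_ae
        exact Filter.Eventually.of_forall fun l => (Complex.ofReal_pow l j).symm
    _ = ((∫ l, l ^ j ∂ρ : ℝ) : ℂ) := cintegral_ofReal

lemma integral_cdiv (ρ : Measure ℝ) :
    ∫ l, (l : ℂ) / (1 + (l : ℂ) ^ 2) ∂ρ = ((∫ l, l / (1 + l ^ 2) ∂ρ : ℝ) : ℂ) := by
  calc ∫ l, (l : ℂ) / (1 + (l : ℂ) ^ 2) ∂ρ = ∫ l, ((l / (1 + l ^ 2) : ℝ) : ℂ) ∂ρ := by
        apply integral_congr_ae
        apply Filter.Eventually.of_forall fun l => ?_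
        push_cast
        ring
    _ = _ := cintegral_ofReal

lemma rep_expand {m : ℂ → ℂ} {a : ℝ} {ρ : Measure ℝ}
    (hint : Integrable (fun l : ℝ => 1 / (1 + l ^ 2)) ρ)
    (hm : ∀ η : ℝ, 1 ≤ η → m (zz η) = (a : ℂ) + ∫ l, g η l ∂ρ)
    (n : ℕ) (hmom : ∀ j ≤ 2 * n, Integrable (fun l : ℝ => |l| ^ j) ρ) :
    (∀ η : ℝ, 1 ≤ η → m (zz η) =
       (∑ j ∈ range (2 * n + 2), (repCoeff a ρ j : ℂ) * ((zz η)⁻¹) ^ j)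
       + ((zz η)⁻¹) ^ (2 * n + 1) * repRem ρ (2 * n + 1) η) ∧
    Tendsto (fun η : ℝ => repRem ρ (2 * n + 1) η) atTop (nhds 0) ∧
    (∀ η : ℝ, 1 ≤ η →
      (repRem ρ (2 * n + 1) η).re = ∫ l, l ^ (2 * n + 2) / (l ^ 2 + η ^ 2) ∂ρ) := by
  have h1 : Integrable (fun _ : ℝ => (1 : ℝ)) ρ := mom_one (hmom 0 (by omega))
  refine ⟨?_, ?_, ?_⟩
  · intro η hη
    have h0 : (0:ℝ) < η := lt_of_lt_of_le one_pos hη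
    have hz : zz η ≠ 0 := zz_ne h0
    set w : ℂ := (zz η)⁻¹ with hw
    have hIj : ∀ j ∈ range (2 * n + 1), Integrable (fun l : ℝ => (l:ℂ) ^ j * w ^ (j+1)) ρ := by
      intro j hj
      rw [mem_range] at hj
      exact (mom_cpow (mom_le (hmom (2*n) le_rfl) h1 (by omega))).mul_const _
    have hI2 : Integrable (fun l : ℝ => (l:ℂ) ^ (2*n+1) * ((l:ℂ) - zz η)⁻¹) ρ :=
      integrable_rem (hmom _ le_rfl) h0
    have hI2' : Integrable (fun l : ℝ => (l:ℂ) ^ (2*n+1) * w ^ (2*n+1) * ((l:ℂ) - zz η)⁻¹) ρ := by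
      apply (hI2.mul_const (w ^ (2*n+1))).congr
      exact Filter.Eventually.of_forall fun l => by ring
    have hI3 : Integrable (fun l : ℝ => (l:ℂ) / (1 + (l:ℂ) ^ 2)) ρ := by
      apply Integrable.mono' h1
      · exact (Complex.continuous_ofReal.div (by continuity)
          (fun l => one_add_sq_ne l)).aestronglyMeasurable
      · exact Filter.Eventually.of_forall fun l => norm_div_one_add_sq_le l
    have hpoint : ∀ l : ℝ, g η l = (∑ j ∈ range (2*n+1), -((l:ℂ) ^ j * w ^ (j+1)))
        + ((l:ℂ) ^ (2*n+1) * w ^ (2*n+1) * ((l:ℂ) - zz η)⁻¹ - (l:ℂ) / (1 + (l:ℂ) ^ 2)) := by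
      intro l
      simp only [g]
      conv_lhs => rw [geom_split (2*n+1) hz (sub_zz_ne h0)]
      rw [Finset.sum_neg_distrib]
      ring
    have hsplit : ∫ l, g η l ∂ρ
        = -(∑ j ∈ range (2*n+1), ((∫ l, l ^ j ∂ρ : ℝ) : ℂ) * w ^ (j+1))
          + (w ^ (2*n+1) * repRem ρ (2*n+1) η - ((∫ l, l / (1 + l ^ 2) ∂ρ : ℝ) : ℂ)) := by
      have hIneg : ∀ j ∈ range (2*n+1),
          Integrable (fun l : ℝ => -((l:ℂ) ^ j * w ^ (j+1))) ρ := fun j hj => (hIj j hj).neg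
      have hIsum : Integrable (fun l : ℝ =>
          ∑ j ∈ range (2*n+1), -((l:ℂ) ^ j * w ^ (j+1))) ρ := integrable_finset_sum _ hIneg
      have hI23 : Integrable (fun l : ℝ =>
          (l:ℂ) ^ (2*n+1) * w ^ (2*n+1) * ((l:ℂ) - zz η)⁻¹ - (l:ℂ) / (1 + (l:ℂ) ^ 2)) ρ :=
        hI2'.sub hI3
      rw [integral_congr_ae (Filter.Eventually.of_forall hpoint)]
      rw [integral_add hIsum hI23]
      rw [integral_finset_sum _ hIneg]
      rw [integral_sub hI2' hI3]
      congr 1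
      · rw [← Finset.sum_neg_distrib]
        apply Finset.sum_congr rfl
        intro j hj
        rw [integral_neg, integral_mul_const, integral_cpow]
      · rw [integral_cdiv]
        congr 1
        have : (fun l : ℝ => (l:ℂ) ^ (2*n+1) * w ^ (2*n+1) * ((l:ℂ) - zz η)⁻¹)
            = fun l : ℝ => ((l:ℂ) ^ (2*n+1) * ((l:ℂ) - zz η)⁻¹) * w ^ (2*n+1) := by
          funext l; ring
        rw [this, integral_mul_const, repRem, mul_comm]
    rw [hm η hη, hsplit, sum_range_succ' (fun j => (repCoeff a ρ j : ℂ) * w ^ j) (2*n+1)]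
    simp only [repCoeff]
    push_cast
    simp only [neg_mul]
    rw [Finset.sum_neg_distrib]
    ring
  · have h₀ : (0:ℂ) = ∫ l, (0:ℂ) ∂ρ := by simp
    simp only [repRem]
    rw [h₀]
    apply tendsto_integral_filter_of_dominated_convergence (bound := fun l => |l| ^ (2*n))
    · filter_upwards [eventually_ge_atTop (1:ℝ)] with η hη
      have h0 : (0:ℝ) < η := lt_of_lt_of_le one_pos hη
      apply Continuous.aestronglyMeasurable
      exact (Complex.continuous_ofReal.pow _).mul
        ((Complex.continuous_ofReal.sub continuous_const).inv₀ fun l => sub_zz_ne h0)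
    · filter_upwards [eventually_ge_atTop (1:ℝ)] with η hη
      have h0 : (0:ℝ) < η := lt_of_lt_of_le one_pos hη
      exact Filter.Eventually.of_forall fun l => norm_pow_mul_inv_le l h0 (2*n)
    · exact hmom _ le_rfl
    · apply Filter.Eventually.of_forall fun l => ?_
      apply squeeze_zero_norm' (a := fun η : ℝ => |l| ^ (2*n+1) * η⁻¹)
      · filter_upwards [eventually_ge_atTop (1:ℝ)] with η hη
        exact norm_pow_mul_inv_le' l (lt_of_lt_of_le one_pos hη) (2*n+1)
      · simpa using tendsto_inv_atTop_zero.const_mul (|l| ^ (2*n+1))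
  · intro η hη
    have h0 : (0:ℝ) < η := lt_of_lt_of_le one_pos hη
    have h2 := integral_re (integrable_rem (hmom _ le_rfl) h0)
    simp only [RCLike.re_to_complex] at h2
    rw [repRem, ← h2]
    apply integral_congr_ae
    apply Filter.Eventually.of_forall fun l => ?_
    simp only [RCLike.re_to_complex]
    rw [← Complex.ofReal_pow, Complex.re_ofReal_mul, Complex.inv_re, Complex.normSq_apply]
    simp only [Complex.sub_re, Complex.ofReal_re, zz_re, sub_zero, Complex.sub_im,
      Complex.ofReal_im, zz_im, zero_sub]
    rw [show l * l + -η * -η = l ^ 2 + η ^ 2 by ring]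
    ring


lemma norm_zz_inv {η : ℝ} (h : 0 < η) : ‖(zz η)⁻¹‖ = η⁻¹ := by
  rw [norm_inv, norm_zz h.le]

lemma term_tendsto_zero (c : ℂ) {A B : ℕ} (h : A < B) :
    Tendsto (fun η : ℝ => c * ((η:ℂ) ^ A * ((zz η)⁻¹) ^ B)) atTop (nhds 0) := by
  apply squeeze_zero_norm' (a := fun η : ℝ => ‖c‖ * η⁻¹)
  · filter_upwards [eventually_ge_atTop (1:ℝ)] with η hη
    have h0 : (0:ℝ) < η := lt_of_lt_of_le one_pos hη
    rw [norm_mul, norm_mul, norm_pow, norm_pow, Complex.norm_real, Real.norm_eq_abs,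
      abs_of_pos h0, norm_zz_inv h0]
    apply mul_le_mul_of_nonneg_left ?_ (norm_nonneg c)
    rw [inv_pow]
    have e : η ^ A * (η ^ B)⁻¹ = (η ^ (B - A))⁻¹ := by
      rw [pow_sub₀ η h0.ne' h.le, mul_inv, inv_inv, mul_comm]
    rw [e]
    apply inv_anti₀ h0
    calc η = η ^ 1 := (pow_one η).symm
      _ ≤ η ^ (B - A) := pow_le_pow_right₀ hη (by omega)
  · simpa using tendsto_inv_atTop_zero.const_mul ‖c‖

lemma tendsto_cpow_inv_zero {j : ℕ} (hj : 1 ≤ j) :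
    Tendsto (fun η : ℝ => (((η:ℂ)) ^ j)⁻¹) atTop (nhds 0) := by
  apply squeeze_zero_norm' (a := fun η : ℝ => η⁻¹)
  · filter_upwards [eventually_ge_atTop (1:ℝ)] with η hη
    have h0 : (0:ℝ) < η := lt_of_lt_of_le one_pos hη
    rw [norm_inv, norm_pow, Complex.norm_real, Real.norm_eq_abs, abs_of_pos h0]
    apply inv_anti₀ h0
    calc η = η ^ 1 := (pow_one η).symm
      _ ≤ η ^ j := pow_le_pow_right₀ hη hj
  · exact tendsto_inv_atTop_zero

lemma poly_limit_zero : ∀ (M : ℕ) (c : ℕ → ℂ),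
    Tendsto (fun η : ℝ => ∑ j ∈ range (M+1), c j * (η:ℂ) ^ (M - j)) atTop (nhds 0) →
    ∀ j ≤ M, c j = 0 := by
  intro M
  induction M with
  | zero =>
    intro c h j hj
    interval_cases j
    have h2 : Tendsto (fun _ : ℝ => c 0) atTop (nhds (c 0)) := tendsto_const_nhds
    have h3 : Tendsto (fun _ : ℝ => c 0) atTop (nhds 0) := by
      apply h.congr
      intro η
      simp
    exact tendsto_nhds_unique h2 h3
  | succ M ih =>
    intro c h j hj
    have hc0 : c 0 = 0 := by
      have h2 : Tendsto (fun η : ℝ =>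
          (∑ j ∈ range (M+2), c j * (η:ℂ) ^ (M+1-j)) * (((η:ℂ)) ^ (M+1))⁻¹) atTop (nhds 0) := by
        simpa using h.mul (tendsto_cpow_inv_zero (j := M+1) (by omega))
      have h3 : Tendsto (fun η : ℝ =>
          (∑ j ∈ range (M+2), c j * (η:ℂ) ^ (M+1-j)) * (((η:ℂ)) ^ (M+1))⁻¹) atTop (nhds (c 0)) := by
        have key : Tendsto (fun η : ℝ =>
            ∑ j ∈ range (M+2), c j * (η:ℂ) ^ (M+1-j) * (((η:ℂ)) ^ (M+1))⁻¹) atTop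
            (nhds (∑ j ∈ range (M+2), if j = 0 then c 0 else 0)) := by
          apply tendsto_finset_sum
          intro j hjm
          rw [mem_range] at hjm
          rcases Nat.eq_zero_or_pos j with rfl | hjpos
          · simp only [if_pos rfl]
            apply Tendsto.congr' ?_ (tendsto_const_nhds (x := c 0))
            filter_upwards [eventually_ge_atTop (1:ℝ)] with η hη
            have h0 : (0:ℝ) < η := lt_of_lt_of_le one_pos hη
            have hne : ((η:ℂ)) ^ (M+1) ≠ 0 := by
              apply pow_ne_zero
              exact_mod_cast h0.ne'
            rw [Nat.sub_zero, mul_assoc, mul_inv_cancel₀ hne, mul_one]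
          · rw [if_neg (by omega)]
            have hbase : Tendsto (fun η : ℝ => c j * (((η:ℂ)) ^ j)⁻¹) atTop (nhds 0) := by
              simpa using (tendsto_cpow_inv_zero (j := j) hjpos).const_mul (c j)
            apply Tendsto.congr' ?_ hbase
            filter_upwards [eventually_ge_atTop (1:ℝ)] with η hη
            have h0 : (0:ℝ) < η := lt_of_lt_of_le one_pos hη
            have hne : ((η:ℂ)) ≠ 0 := by exact_mod_cast h0.ne'
            have hsplit : ((η:ℂ)) ^ (M+1) = (η:ℂ) ^ (M+1-j) * (η:ℂ) ^ j := by
              rw [← pow_add]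
              congr 1
              omega
            rw [hsplit, mul_inv, ← mul_assoc, mul_assoc (c j), mul_inv_cancel₀
              (pow_ne_zero _ hne), mul_one]
        have hsum : (∑ j ∈ range (M+2), if j = 0 then c 0 else 0) = c 0 := by
          rw [Finset.sum_ite_eq' (range (M+2)) 0 (fun _ => c 0)]
          simp
        rw [hsum] at key
        apply key.congr
        intro η
        rw [Finset.sum_mul]
      exact tendsto_nhds_unique h3 h2
    rcases Nat.eq_zero_or_pos j with rfl | hjpos
    · exact hc0
    · obtain ⟨i, rfl⟩ := Nat.exists_eq_add_of_lt hjpos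
      rw [zero_add] at *
      have h' : Tendsto (fun η : ℝ => ∑ k ∈ range (M+1), c (k+1) * (η:ℂ) ^ (M - k))
          atTop (nhds 0) := by
        apply h.congr
        intro η
        rw [sum_range_succ' (fun k => c k * (η:ℂ) ^ (M+1-k)) (M+1)]
        simp only [hc0, zero_mul, add_zero, Nat.succ_sub_succ]
      exact ih (fun k => c (k+1)) h' i (by omega)

/-- `m` admits a real-coefficient asymptotic expansion to order `M` along the imaginary axis. -/
def TopExp (m : ℂ → ℂ) (u : ℕ → ℝ) (M : ℕ) : Prop :=
  Tendsto (fun η : ℝ => (η:ℂ) ^ M *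
    (m (zz η) - ∑ j ∈ range (M+1), (u j : ℂ) * ((zz η)⁻¹) ^ j)) atTop (nhds 0)

lemma topExp_lower {m : ℂ → ℂ} {u : ℕ → ℝ} {M : ℕ} (h : TopExp m u M) {N : ℕ} (hN : N ≤ M) :
    Tendsto (fun η : ℝ => (η:ℂ) ^ N *
      (m (zz η) - ∑ j ∈ range (N+1), (u j : ℂ) * ((zz η)⁻¹) ^ j)) atTop (nhds 0) := by
  have hsub : range (N+1) ⊆ range (M+1) := Finset.range_subset_range.mpr (by omega)
  have hA : Tendsto (fun η : ℝ => (η:ℂ) ^ N *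
      (m (zz η) - ∑ j ∈ range (M+1), (u j : ℂ) * ((zz η)⁻¹) ^ j)) atTop (nhds 0) := by
    apply squeeze_zero_norm' (a := fun η : ℝ => ‖(η:ℂ) ^ M *
      (m (zz η) - ∑ j ∈ range (M+1), (u j : ℂ) * ((zz η)⁻¹) ^ j)‖)
    · filter_upwards [eventually_ge_atTop (1:ℝ)] with η hη
      have h0 : (0:ℝ) < η := lt_of_lt_of_le one_pos hη
      rw [norm_mul, norm_mul, norm_pow, norm_pow, Complex.norm_real, Real.norm_eq_abs,
        abs_of_pos h0]
      exact mul_le_mul_of_nonneg_right (pow_le_pow_right₀ hη hN) (norm_nonneg _)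
    · have := h.norm
      rwa [norm_zero] at this
  have hB : Tendsto (fun η : ℝ => ∑ j ∈ range (M+1) \ range (N+1),
      (u j : ℂ) * ((η:ℂ) ^ N * ((zz η)⁻¹) ^ j)) atTop (nhds 0) := by
    have h0 : (0:ℂ) = ∑ j ∈ range (M+1) \ range (N+1), (0:ℂ) := by simp
    rw [h0]
    apply tendsto_finset_sum
    intro j hj
    rw [Finset.mem_sdiff, mem_range, mem_range] at hj
    exact term_tendsto_zero _ (by omega)
  have := hA.add hB
  rw [add_zero] at this
  apply this.congr
  intro η
  have e1 : ∑ j ∈ range (M+1) \ range (N+1), (u j : ℂ) * ((η:ℂ) ^ N * ((zz η)⁻¹) ^ j)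
      = (η:ℂ) ^ N * ((∑ j ∈ range (M+1), (u j : ℂ) * ((zz η)⁻¹) ^ j)
        - (∑ j ∈ range (N+1), (u j : ℂ) * ((zz η)⁻¹) ^ j)) := by
    rw [← Finset.sum_sdiff_eq_sub hsub, Finset.mul_sum]
    apply Finset.sum_congr rfl
    intro j hj
    ring
  rw [e1]
  ring


lemma tendsto_cim {f : ℝ → ℂ} {z : ℂ} {l : Filter ℝ} (h : Tendsto f l (nhds z)) :
    Tendsto (fun x => (f x).im) l (nhds z.im) :=
  (Complex.continuous_im.tendsto z).comp h

lemma tendsto_cre {f : ℝ → ℂ} {z : ℂ} {l : Filter ℝ} (h : Tendsto f l (nhds z)) :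
    Tendsto (fun x => (f x).re) l (nhds z.re) :=
  (Complex.continuous_re.tendsto z).comp h

lemma ratio_tendsto_one (l : ℝ) :
    Tendsto (fun η : ℝ => η ^ 2 / (l ^ 2 + η ^ 2)) atTop (nhds 1) := by
  have h1 : Tendsto (fun η : ℝ => l ^ 2 / (l ^ 2 + η ^ 2)) atTop (nhds 0) := by
    apply squeeze_zero_norm' (a := fun η : ℝ => l ^ 2 * (η ^ 2)⁻¹)
    · filter_upwards [eventually_ge_atTop (1:ℝ)] with η hη
      have h0 : (0:ℝ) < η := lt_of_lt_of_le one_pos hη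
      calc ‖l ^ 2 / (l ^ 2 + η ^ 2)‖ = l ^ 2 / (l ^ 2 + η ^ 2) := by
            rw [Real.norm_eq_abs, _root_.abs_of_nonneg (by positivity)]
        _ ≤ l ^ 2 / η ^ 2 := by gcongr <;> nlinarith [sq_nonneg l]
        _ = l ^ 2 * (η ^ 2)⁻¹ := div_eq_mul_inv _ _
    · have h2 : Tendsto (fun η : ℝ => (η ^ 2)⁻¹) atTop (nhds 0) :=
        (tendsto_pow_atTop (by omega : 2 ≠ 0)).inv_tendsto_atTop
      simpa using h2.const_mul (l ^ 2)
  have h2 := (tendsto_const_nhds (x := (1:ℝ)) (f := atTop (α := ℝ))).sub h1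
  rw [sub_zero] at h2
  apply h2.congr'
  filter_upwards [eventually_ge_atTop (1:ℝ)] with η hη
  have h0 : (0:ℝ) < η := lt_of_lt_of_le one_pos hη
  field_simp
  ring

lemma mom_of_tendsto {ρ : Measure ℝ} {q : ℕ} (hq : Even q) {L : ℝ}
    (hInt : ∀ η : ℝ, 1 ≤ η → Integrable (fun l : ℝ => l ^ q * (η ^ 2 / (l ^ 2 + η ^ 2))) ρ)
    (hlim : Tendsto (fun η : ℝ => ∫ l, l ^ q * (η ^ 2 / (l ^ 2 + η ^ 2)) ∂ρ) atTop (nhds L)) :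
    Integrable (fun l : ℝ => |l| ^ q) ρ := by
  set F : ℕ → ℝ → ℝ := fun k l => l ^ q * (((k:ℝ)+1) ^ 2 / (l ^ 2 + ((k:ℝ)+1) ^ 2)) with hF
  have hnat : Tendsto (fun k : ℕ => ((k:ℝ)+1)) atTop atTop :=
    tendsto_atTop_add_const_right _ 1 tendsto_natCast_atTop_atTop
  have hnonneg : ∀ k l, 0 ≤ F k l := by
    intro k l
    have := hq.pow_nonneg l
    positivity
  have hmeas : ∀ k : ℕ, Measurable fun l => ENNReal.ofReal (F k l) := by
    intro k
    apply Measurable.ennreal_ofReal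
    have hc : Continuous (fun l : ℝ => F k l) := by
      apply Continuous.mul (continuous_pow q)
      exact Continuous.div continuous_const (by continuity) (fun l => by positivity)
    exact hc.measurable
  have hptw : ∀ l : ℝ, Tendsto (fun k : ℕ => F k l) atTop (nhds (l ^ q)) := by
    intro l
    have h1 : Tendsto (fun η : ℝ => l ^ q * (η ^ 2 / (l ^ 2 + η ^ 2))) atTop
        (nhds (l ^ q * 1)) := (ratio_tendsto_one l).const_mul _
    rw [mul_one] at h1
    exact h1.comp hnat
  have hkey : ∫⁻ l, ENNReal.ofReal (|l| ^ q) ∂ρ ≤ ENNReal.ofReal L := by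
    have e1 : ∀ l : ℝ, ENNReal.ofReal (|l| ^ q)
        = liminf (fun k : ℕ => ENNReal.ofReal (F k l)) atTop := by
      intro l
      rw [hq.pow_abs]
      exact (ENNReal.tendsto_ofReal (hptw l)).liminf_eq.symm
    calc ∫⁻ l, ENNReal.ofReal (|l| ^ q) ∂ρ
        = ∫⁻ l, liminf (fun k : ℕ => ENNReal.ofReal (F k l)) atTop ∂ρ := by
          apply lintegral_congr
          exact e1
      _ ≤ liminf (fun k : ℕ => ∫⁻ l, ENNReal.ofReal (F k l) ∂ρ) atTop :=
          lintegral_liminf_le hmeas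
      _ = liminf (fun k : ℕ => ENNReal.ofReal (∫ l, F k l ∂ρ)) atTop := by
          apply Filter.liminf_congr
          apply Filter.Eventually.of_forall fun k => ?_
          rw [← ofReal_integral_eq_lintegral_ofReal
            (hInt ((k:ℝ)+1) (by linarith [Nat.cast_nonneg (α := ℝ) k]))
            (Filter.Eventually.of_forall (hnonneg k))]
      _ = ENNReal.ofReal L := by
          apply Filter.Tendsto.liminf_eq
          exact ENNReal.tendsto_ofReal (hlim.comp hnat)
  constructor
  · exact ((_root_.continuous_abs.pow q).aestronglyMeasurable)
  · rw [hasFiniteIntegral_iff_ofReal (Filter.Eventually.of_forall fun l => by positivity)]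
    exact lt_of_le_of_lt hkey ENNReal.ofReal_lt_top


lemma base_case {m : ℂ → ℂ} {a : ℝ} {ρ : Measure ℝ}
    (hint : Integrable (fun l : ℝ => 1 / (1 + l ^ 2)) ρ)
    (hm : ∀ η : ℝ, 1 ≤ η → m (zz η) = (a : ℂ) + ∫ l, g η l ∂ρ)
    {u : ℕ → ℝ} {M : ℕ} (hM : 1 ≤ M) (hexp : TopExp m u M) :
    Integrable (fun l : ℝ => |l| ^ 0) ρ := by
  have h1 := topExp_lower hexp (N := 1) hM
  have him := tendsto_cim h1
  rw [Complex.zero_im] at him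
  have hS : Tendsto (fun η : ℝ => ∫ l, l ^ 0 * (η ^ 2 / (l ^ 2 + η ^ 2)) ∂ρ) atTop
      (nhds (-(u 1))) := by
    have h2 := him.sub (tendsto_const_nhds (x := u 1))
    rw [zero_sub] at h2
    apply h2.congr'
    filter_upwards [eventually_ge_atTop (1:ℝ)] with η hη
    have h0 : (0:ℝ) < η := lt_of_lt_of_le one_pos hη
    have hzw := eta_mul_zz_inv h0
    rw [hm η hη]
    have e0 : (η:ℂ) ^ 1 * (((a:ℂ) + ∫ l, g η l ∂ρ)
          - ∑ j ∈ range 2, (u j : ℂ) * ((zz η)⁻¹) ^ j)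
        = ((η * (a - u 0) : ℝ) : ℂ) + (η:ℂ) * (∫ l, g η l ∂ρ) + (u 1 : ℂ) * Complex.I := by
      rw [sum_range_succ, sum_range_one]
      push_cast
      linear_combination (-((u 1 : ℝ) : ℂ)) * hzw
    rw [e0]
    have eim : (((η * (a - u 0) : ℝ) : ℂ) + (η:ℂ) * (∫ l, g η l ∂ρ) + (u 1 : ℂ) * Complex.I).im
        = η * (∫ l, g η l ∂ρ).im + u 1 := by
      simp [Complex.add_im, Complex.mul_im]
    rw [eim]
    have h3 := integral_im (integrable_g hint hη)
    simp only [RCLike.im_to_complex] at h3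
    rw [← h3, add_sub_cancel_right, ← integral_const_mul]
    apply integral_congr_ae
    apply Filter.Eventually.of_forall fun l => ?_
    show η * (g η l).im = l ^ 0 * (η ^ 2 / (l ^ 2 + η ^ 2))
    rw [im_g]
    simp only [pow_zero, one_mul]
    ring
  have hInt : ∀ η : ℝ, 1 ≤ η → Integrable (fun l : ℝ => l ^ 0 * (η ^ 2 / (l ^ 2 + η ^ 2))) ρ := by
    intro η hη
    have h0 : (0:ℝ) < η := lt_of_lt_of_le one_pos hη
    apply Integrable.mono' (hint.const_mul (η ^ 2))
    · apply Continuous.aestronglyMeasurable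
      apply Continuous.mul (continuous_pow 0)
      exact Continuous.div continuous_const (by continuity) (fun l => by positivity)
    · apply Filter.Eventually.of_forall fun l => ?_
      simp only [pow_zero, one_mul]
      rw [Real.norm_eq_abs, _root_.abs_of_nonneg (by positivity), mul_one_div]
      apply div_le_div_of_nonneg_left (by positivity) (by positivity)
      nlinarith [sq_nonneg l, sq_nonneg η]
  exact mom_of_tendsto Even.zero hInt hS

lemma step_case {m : ℂ → ℂ} {a : ℝ} {ρ : Measure ℝ}
    (hint : Integrable (fun l : ℝ => 1 / (1 + l ^ 2)) ρ)
    (hm : ∀ η : ℝ, 1 ≤ η → m (zz η) = (a : ℂ) + ∫ l, g η l ∂ρ)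
    {u : ℕ → ℝ} {M : ℕ} (hexp : TopExp m u M) (n : ℕ) (hM : 2*n+3 ≤ M)
    (hQn : Integrable (fun l : ℝ => |l| ^ (2*n)) ρ)
    (hQ0 : Integrable (fun l : ℝ => |l| ^ 0) ρ) :
    Integrable (fun l : ℝ => |l| ^ (2*n+2)) ρ := by
  have h1 : Integrable (fun _ : ℝ => (1:ℝ)) ρ := mom_one hQ0
  have hmom : ∀ j ≤ 2*n, Integrable (fun l : ℝ => |l| ^ j) ρ := fun j hj => mom_le hQn h1 hj
  obtain ⟨hrepr, hR0, hRre⟩ := rep_expand hint hm n hmom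
  have hk : ∀ (η : ℝ), 0 < η → ∀ (k : ℕ), (η:ℂ) ^ k * ((zz η)⁻¹) ^ k = (-Complex.I) ^ k := by
    intro η h0 k
    rw [← mul_pow, eta_mul_zz_inv h0]
  -- coefficient matching
  have hG : Tendsto (fun η : ℝ => (η:ℂ) ^ (2*n+1) * (m (zz η)
      - ∑ j ∈ range (2*n+2), (repCoeff a ρ j : ℂ) * ((zz η)⁻¹) ^ j)) atTop (nhds 0) := by
    have h2 := hR0.const_mul ((-Complex.I) ^ (2*n+1))
    rw [mul_zero] at h2
    apply h2.congr'
    filter_upwards [eventually_ge_atTop (1:ℝ)] with η hη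
    have h0 : (0:ℝ) < η := lt_of_lt_of_le one_pos hη
    rw [hrepr η hη, add_sub_cancel_left, ← mul_assoc, ← hk η h0 (2*n+1)]
  have hF := topExp_lower hexp (N := 2*n+1) (by omega)
  have hdiff : Tendsto (fun η : ℝ => ∑ j ∈ range (2*n+2),
      (((u j : ℂ) - (repCoeff a ρ j : ℂ)) * (-Complex.I) ^ j) * (η:ℂ) ^ (2*n+1 - j))
      atTop (nhds 0) := by
    have h3 := hG.sub hF
    rw [sub_zero] at h3
    apply h3.congr'
    filter_upwards [eventually_ge_atTop (1:ℝ)] with η hη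
    have h0 : (0:ℝ) < η := lt_of_lt_of_le one_pos hη
    rw [← mul_sub, sub_sub_sub_cancel_left, ← Finset.sum_sub_distrib, Finset.mul_sum]
    apply Finset.sum_congr rfl
    intro j hj
    rw [mem_range] at hj
    have hsplit : ((η:ℂ)) ^ (2*n+1) = (η:ℂ) ^ (2*n+1-j) * (η:ℂ) ^ j := by
      rw [← pow_add]
      congr 1
      omega
    rw [← sub_mul, hsplit]
    calc (η:ℂ) ^ (2*n+1-j) * (η:ℂ) ^ j * (((u j : ℂ) - (repCoeff a ρ j : ℂ)) * ((zz η)⁻¹) ^ j)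
        = ((u j : ℂ) - (repCoeff a ρ j : ℂ)) * ((η:ℂ) ^ j * ((zz η)⁻¹) ^ j)
          * (η:ℂ) ^ (2*n+1-j) := by ring
      _ = _ := by rw [hk η h0 j]
  have hmatch := poly_limit_zero (2*n+1) _ hdiff
  have hujc : ∀ j, j ≤ 2*n+1 → (u j : ℂ) = (repCoeff a ρ j : ℂ) := by
    intro j hj
    have h4 := hmatch j hj
    rcases mul_eq_zero.mp h4 with h5 | h5
    · exact sub_eq_zero.mp h5
    · exact absurd h5 (pow_ne_zero _ (neg_ne_zero.mpr Complex.I_ne_zero))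
  -- extraction at order 2n+3
  have hN := topExp_lower hexp (N := 2*n+3) hM
  have hV : Tendsto (fun η : ℝ => (η:ℂ) ^ 2 * repRem ρ (2*n+1) η
      + Complex.I * (u (2*n+2) : ℂ) * (η:ℂ) + ((u (2*n+3) : ℝ) : ℂ)) atTop (nhds 0) := by
    have h6 := hN.const_mul (((-Complex.I) ^ (2*n+1))⁻¹)
    rw [mul_zero] at h6
    apply h6.congr'
    filter_upwards [eventually_ge_atTop (1:ℝ)] with η hη
    have h0 : (0:ℝ) < η := lt_of_lt_of_le one_pos hη
    have hJne : ((-Complex.I) ^ (2*n+1) : ℂ) ≠ 0 :=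
      pow_ne_zero _ (neg_ne_zero.mpr Complex.I_ne_zero)
    have t1 : (η:ℂ) ^ (2*n+3) * ((zz η)⁻¹) ^ (2*n+1)
        = (η:ℂ) ^ 2 * (-Complex.I) ^ (2*n+1) := by
      rw [show 2*n+3 = 2 + (2*n+1) by omega, pow_add, mul_assoc, hk η h0 (2*n+1)]
    have t2 : (η:ℂ) ^ (2*n+3) * ((zz η)⁻¹) ^ (2*n+2)
        = (η:ℂ) * ((-Complex.I) * (-Complex.I) ^ (2*n+1)) := by
      rw [show 2*n+3 = 1 + (2*n+2) by omega, pow_add, pow_one, mul_assoc, hk η h0 (2*n+2),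
        show 2*n+2 = (2*n+1)+1 by omega, pow_succ]
      ring
    have t3 : (η:ℂ) ^ (2*n+3) * ((zz η)⁻¹) ^ (2*n+3) = -((-Complex.I) ^ (2*n+1)) := by
      rw [hk η h0 (2*n+3), show 2*n+3 = (2*n+1)+2 by omega, pow_add, neg_sq, Complex.I_sq]
      ring
    have hQid : (η:ℂ) ^ (2*n+3) * (m (zz η)
        - ∑ j ∈ range (2*n+3+1), (u j : ℂ) * ((zz η)⁻¹) ^ j)
        = (-Complex.I) ^ (2*n+1) * ((η:ℂ) ^ 2 * repRem ρ (2*n+1) η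
          + Complex.I * (u (2*n+2) : ℂ) * (η:ℂ) + ((u (2*n+3) : ℝ) : ℂ)) := by
      rw [hrepr η hη]
      rw [show (2*n+3+1) = (2*n+3)+1 by omega,
        sum_range_succ (fun j => (u j : ℂ) * ((zz η)⁻¹) ^ j) (2*n+3),
        sum_range_succ (fun j => (u j : ℂ) * ((zz η)⁻¹) ^ j) (2*n+2)]
      have hcongr : ∑ j ∈ range (2*n+2), (u j : ℂ) * ((zz η)⁻¹) ^ j
          = ∑ j ∈ range (2*n+2), (repCoeff a ρ j : ℂ) * ((zz η)⁻¹) ^ j := by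
        apply Finset.sum_congr rfl
        intro j hj
        rw [mem_range] at hj
        rw [hujc j (by omega)]
      rw [hcongr]
      linear_combination (repRem ρ (2*n+1) η) * t1 - ((u (2*n+2) : ℝ) : ℂ) * t2
        - ((u (2*n+3) : ℝ) : ℂ) * t3
    rw [hQid, ← mul_assoc, inv_mul_cancel₀ hJne, one_mul]
  have hVre := tendsto_cre hV
  rw [Complex.zero_re] at hVre
  have hS : Tendsto (fun η : ℝ => ∫ l, l ^ (2*n+2) * (η ^ 2 / (l ^ 2 + η ^ 2)) ∂ρ) atTop
      (nhds (-(u (2*n+3)))) := by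
    have h7 := hVre.sub (tendsto_const_nhds (x := u (2*n+3)))
    rw [zero_sub] at h7
    apply h7.congr'
    filter_upwards [eventually_ge_atTop (1:ℝ)] with η hη
    have h0 : (0:ℝ) < η := lt_of_lt_of_le one_pos hη
    have e2 : (η:ℂ) ^ 2 = ((η ^ 2 : ℝ) : ℂ) := by push_cast; ring
    have e3 : (Complex.I * ((u (2*n+2) : ℝ) : ℂ) * (η:ℂ)).re = 0 := by
      simp [Complex.mul_re, Complex.mul_im]
    rw [Complex.add_re, Complex.add_re, e2, Complex.re_ofReal_mul, e3, add_zero,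
      Complex.ofReal_re, hRre η hη, add_sub_cancel_right, ← integral_const_mul]
    apply integral_congr_ae
    apply Filter.Eventually.of_forall fun l => ?_
    ring
  have hInt : ∀ η : ℝ, 1 ≤ η → Integrable
      (fun l : ℝ => l ^ (2*n+2) * (η ^ 2 / (l ^ 2 + η ^ 2))) ρ := by
    intro η hη
    have h0 : (0:ℝ) < η := lt_of_lt_of_le one_pos hη
    apply ((integrable_cauchy hQn h0).const_mul (η ^ 2)).congr
    exact Filter.Eventually.of_forall fun l => by ring
  exact mom_of_tendsto (by exact ⟨n+1, by ring⟩) hInt hS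

lemma HN {m : ℂ → ℂ} {a : ℝ} {ρ : Measure ℝ}
    (hint : Integrable (fun l : ℝ => 1 / (1 + l ^ 2)) ρ)
    (hm : ∀ η : ℝ, 1 ≤ η → m (zz η) = (a : ℂ) + ∫ l, g η l ∂ρ)
    (K : ℕ) (u : ℕ → ℝ) (hexp : TopExp m u (2*K+1)) :
    ∀ j ≤ 2*K, Integrable (fun l : ℝ => |l| ^ j) ρ := by
  have hQ0 : Integrable (fun l : ℝ => |l| ^ 0) ρ := base_case hint hm (by omega) hexp
  have main : ∀ n : ℕ, n ≤ K → Integrable (fun l : ℝ => |l| ^ (2*n)) ρ := by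
    intro n
    induction n with
    | zero => intro _; exact hQ0
    | succ n ih =>
      intro hn
      have hs := step_case hint hm hexp n (by omega) (ih (by omega)) hQ0
      have : 2*(n+1) = 2*n+2 := by omega
      rw [this]
      exact hs
  intro j hj
  exact mom_le (main K le_rfl) (mom_one hQ0) hj


lemma exp_of_moments {m : ℂ → ℂ} {a : ℝ} {ρ : Measure ℝ}
    (hint : Integrable (fun l : ℝ => 1 / (1 + l ^ 2)) ρ)
    (hm : ∀ η : ℝ, 1 ≤ η → m (zz η) = (a : ℂ) + ∫ l, g η l ∂ρ)
    (K : ℕ) (hmom : ∀ j ≤ 2 * K, Integrable (fun l : ℝ => |l| ^ j) ρ) :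
    TopExp m (repCoeff a ρ) (2 * K + 1) := by
  obtain ⟨hrepr, hR0, -⟩ := rep_expand hint hm K hmom
  have h2 := hR0.const_mul ((-Complex.I) ^ (2 * K + 1))
  rw [mul_zero] at h2
  apply h2.congr'
  filter_upwards [eventually_ge_atTop (1:ℝ)] with η hη
  have h0 : (0:ℝ) < η := lt_of_lt_of_le one_pos hη
  rw [show 2 * K + 1 + 1 = 2 * K + 2 by omega, hrepr η hη, add_sub_cancel_left,
    ← mul_assoc, ← mul_pow, eta_mul_zz_inv h0]

lemma m_zero_of_coeffs {m : ℂ → ℂ} {a b : ℝ} {ρ : Measure ℝ} (hrep : HerglotzRep m a b ρ)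
    (hb : b = 0) (hfin : Integrable (fun _ : ℝ => (1:ℝ)) ρ)
    (h0 : repCoeff a ρ 0 = 0) (h1 : repCoeff a ρ 1 = 0) :
    ∀ η : ℝ, 1 ≤ η → m (zz η) = 0 := by
  have hρ : ρ = 0 := by
    have h2 : ∫ l, (1:ℝ) ∂ρ = 0 := by
      have h3 : -(∫ l, l ^ 0 ∂ρ) = 0 := h1
      have h4 : ∫ l, l ^ 0 ∂ρ = 0 := by linarith
      rw [← h4]
      apply integral_congr_ae
      exact Filter.Eventually.of_forall fun l => by simp
    rw [integral_const, smul_eq_mul, mul_one] at h2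
    have h5 : ρ Set.univ < ⊤ := by
      rcases (integrable_const_iff.mp hfin) with h | h
      · norm_num at h
      · exact h.measure_univ_lt_top
    have h6 := (ENNReal.toReal_eq_zero_iff _).mp h2
    rcases h6 with h6 | h6
    · exact Measure.measure_univ_eq_zero.mp h6
    · rw [h6] at h5
      exact absurd h5 (lt_irrefl _)
  have ha : a = 0 := by
    rw [hρ] at h0
    have h7 : repCoeff a (0 : Measure ℝ) 0 = a := by
      show a - ∫ l, l / (1 + l ^ 2) ∂(0 : Measure ℝ) = a
      simp
    rw [h7] at h0
    exact h0
  intro η hη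
  have hη0 : (0:ℝ) < η := lt_of_lt_of_le one_pos hη
  rw [hrep.2.2 (zz η) (by simp [hη0.ne']), hρ, ha, hb]
  simp

noncomputable def invCoeff (v : ℕ → ℝ) : ℕ → ℝ
  | 0 => -(v 0)⁻¹
  | (k+1) => -(v 0)⁻¹ * ∑ i ∈ (Finset.range (k+1)).attach,
      invCoeff v i.1 * v (k+1-i.1)
  decreasing_by
    have := i.2
    rw [Finset.mem_range] at this
    omega

lemma invCoeff_succ (v : ℕ → ℝ) (k : ℕ) :
    invCoeff v (k+1) = -(v 0)⁻¹ * ∑ i ∈ Finset.range (k+1), invCoeff v i * v (k+1-i) := by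
  rw [invCoeff]
  congr 1
  exact Finset.sum_attach (Finset.range (k+1)) (fun i => invCoeff v i * v (k+1-i))

lemma invCoeff_conv {v : ℕ → ℝ} (hv : v 0 ≠ 0) (k : ℕ) :
    ∑ i ∈ range (k+1), invCoeff v i * v (k-i) = if k = 0 then -1 else 0 := by
  cases k with
  | zero =>
    rw [if_pos rfl]
    rw [sum_range_one, Nat.sub_zero]
    have h7 : invCoeff v 0 = -(v 0)⁻¹ := by rw [invCoeff]
    rw [h7]
    field_simp
  | succ k =>
    rw [if_neg (by omega), sum_range_succ, Nat.sub_self, invCoeff_succ]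
    field_simp
    ring

lemma tendsto_poly_w (c : ℕ → ℝ) (N : ℕ) :
    Tendsto (fun η : ℝ => ∑ j ∈ range (N+1), (c j : ℂ) * ((zz η)⁻¹) ^ j) atTop
      (nhds ((c 0 : ℝ) : ℂ)) := by
  have key : Tendsto (fun η : ℝ => ∑ j ∈ range (N+1), (c j : ℂ) * ((zz η)⁻¹) ^ j) atTop
      (nhds (∑ j ∈ range (N+1), if j = 0 then ((c 0 : ℝ) : ℂ) else 0)) := by
    apply tendsto_finset_sum
    intro j hj
    rcases Nat.eq_zero_or_pos j with rfl | hjpos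
    · rw [if_pos rfl]
      apply Tendsto.congr ?_ (tendsto_const_nhds (x := ((c 0 : ℝ) : ℂ)))
      intro η
      rw [pow_zero, mul_one]
    · rw [if_neg (by omega)]
      have h2 := term_tendsto_zero ((c j : ℝ) : ℂ) (A := 0) (B := j) hjpos
      apply h2.congr
      intro η
      rw [pow_zero, one_mul]
  have hsum : (∑ j ∈ range (N+1), if j = 0 then ((c 0 : ℝ) : ℂ) else 0) = ((c 0 : ℝ):ℂ) := by
    rw [Finset.sum_ite_eq' (range (N+1)) 0 (fun _ => ((c 0 : ℝ):ℂ))]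
    simp
  rwa [hsum] at key

lemma conv_poly {v : ℕ → ℝ} (hv : v 0 ≠ 0) (M : ℕ) (w : ℂ) :
    1 + (∑ j ∈ range (M+1), (v j : ℂ) * w ^ j)
      * (∑ j ∈ range (M+1), (invCoeff v j : ℂ) * w ^ j)
    = ∑ p ∈ (range (M+1) ×ˢ range (M+1)).filter (fun p => ¬ p.1 + p.2 ≤ M),
        ((invCoeff v p.1 : ℂ) * (v p.2 : ℂ)) * w ^ (p.1 + p.2) := by
  set u : ℕ → ℝ := invCoeff v with hu
  have e1 : (∑ j ∈ range (M+1), (v j : ℂ) * w ^ j) * (∑ j ∈ range (M+1), (u j : ℂ) * w ^ j)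
      = ∑ p ∈ range (M+1) ×ˢ range (M+1), ((u p.1 : ℂ) * (v p.2 : ℂ)) * w ^ (p.1 + p.2) := by
    rw [Finset.sum_product]
    rw [mul_comm, Finset.sum_mul_sum]
    apply Finset.sum_congr rfl
    intro i _
    apply Finset.sum_congr rfl
    intro j _
    rw [pow_add]
    ring
  rw [e1, ← Finset.sum_filter_add_sum_filter_not (range (M+1) ×ˢ range (M+1))
    (fun p => p.1 + p.2 ≤ M)]
  have hset : (range (M+1) ×ˢ range (M+1)).filter (fun p => p.1 + p.2 ≤ M)
      = (range (M+1)).biUnion (fun k => Finset.HasAntidiagonal.antidiagonal k) := by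
    ext ⟨i, j⟩
    simp only [Finset.mem_filter, Finset.mem_product, Finset.mem_biUnion, mem_range,
      Finset.HasAntidiagonal.mem_antidiagonal]
    constructor
    · rintro ⟨⟨hi, hj⟩, hij⟩
      exact ⟨i + j, by omega, rfl⟩
    · rintro ⟨k, hk, hij⟩
      omega
  have hdisj : (↑(range (M+1)) : Set ℕ).PairwiseDisjoint
      (fun k => (Finset.HasAntidiagonal.antidiagonal k : Finset (ℕ × ℕ))) := by
    intro k _ k' _ hkk'
    simp only [Function.onFun, Finset.disjoint_left]
    intro p hp hp'
    rw [Finset.HasAntidiagonal.mem_antidiagonal] at hp hp'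
    omega
  have hA : ∑ p ∈ (range (M+1) ×ˢ range (M+1)).filter (fun p => p.1 + p.2 ≤ M),
      ((u p.1 : ℂ) * (v p.2 : ℂ)) * w ^ (p.1 + p.2) = -1 := by
    rw [hset, Finset.sum_biUnion hdisj]
    have hinner : ∀ k ∈ range (M+1), ∑ p ∈ Finset.HasAntidiagonal.antidiagonal k,
        ((u p.1 : ℂ) * (v p.2 : ℂ)) * w ^ (p.1 + p.2)
        = ((if k = 0 then (-1:ℝ) else 0 : ℝ) : ℂ) * w ^ k := by
      intro k _
      rw [Finset.Nat.sum_antidiagonal_eq_sum_range_succ_mk]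
      have e2 : ∀ i ∈ range (k+1), ((u i : ℂ) * (v (k-i) : ℂ)) * w ^ (i + (k - i))
          = ((u i * v (k-i) : ℝ) : ℂ) * w ^ k := by
        intro i hi
        rw [mem_range] at hi
        rw [show i + (k - i) = k by omega]
        push_cast
        ring
      rw [Finset.sum_congr rfl e2, ← Finset.sum_mul, ← Complex.ofReal_sum]
      congr 2
      exact invCoeff_conv hv k
    rw [Finset.sum_congr rfl hinner]
    rw [Finset.sum_eq_single_of_mem 0 (by simp)]
    · simp
    · intro k _ hk
      rw [if_neg hk]
      simp
  rw [hA]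
  ring

lemma inv_topExp {m₁ m₂ : ℂ → ℂ} {v : ℕ → ℝ} {M : ℕ} (hv : v 0 ≠ 0)
    (hexp : TopExp m₂ v M)
    (hrel : ∀ η : ℝ, 1 ≤ η → m₁ (zz η) = -(m₂ (zz η))⁻¹) :
    TopExp m₁ (invCoeff v) M := by
  have hv0 : ((v 0 : ℝ) : ℂ) ≠ 0 := by exact_mod_cast hv
  have hm2lim : Tendsto (fun η : ℝ => m₂ (zz η)) atTop (nhds ((v 0 : ℝ) : ℂ)) := by
    have h0 := topExp_lower hexp (N := 0) (Nat.zero_le M)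
    have h1 := h0.add (tendsto_const_nhds (x := ((v 0 : ℝ) : ℂ)))
    simp only [zero_add] at h1
    apply h1.congr
    intro η
    rw [sum_range_one]
    simp
  have hne : ∀ᶠ η : ℝ in atTop, m₂ (zz η) ≠ 0 := hm2lim.eventually_ne hv0
  have hinv : Tendsto (fun η : ℝ => (m₂ (zz η))⁻¹) atTop (nhds (((v 0 : ℝ) : ℂ))⁻¹) :=
    hm2lim.inv₀ hv0
  have hPu := tendsto_poly_w (invCoeff v) M
  have hkey : Tendsto (fun η : ℝ => (η:ℂ) ^ M * (1 + m₂ (zz η)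
      * ∑ j ∈ range (M+1), (invCoeff v j : ℂ) * ((zz η)⁻¹) ^ j)) atTop (nhds 0) := by
    have hA : Tendsto (fun η : ℝ => ((η:ℂ) ^ M * (m₂ (zz η)
        - ∑ j ∈ range (M+1), (v j : ℂ) * ((zz η)⁻¹) ^ j))
        * (∑ j ∈ range (M+1), (invCoeff v j : ℂ) * ((zz η)⁻¹) ^ j)) atTop (nhds 0) := by
      have := hexp.mul hPu
      rwa [zero_mul] at this
    have hB : Tendsto (fun η : ℝ => ∑ p ∈ (range (M+1) ×ˢ range (M+1)).filter
        (fun p => ¬ p.1 + p.2 ≤ M),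
        ((invCoeff v p.1 : ℂ) * (v p.2 : ℂ)) * ((η:ℂ) ^ M * ((zz η)⁻¹) ^ (p.1 + p.2))) atTop
        (nhds 0) := by
      have h00 : (0:ℂ) = ∑ p ∈ (range (M+1) ×ˢ range (M+1)).filter
          (fun p => ¬ p.1 + p.2 ≤ M), (0:ℂ) := by simp
      rw [h00]
      apply tendsto_finset_sum
      intro p hp
      rw [Finset.mem_filter] at hp
      exact term_tendsto_zero _ (by omega)
    have h2 := hB.add hA
    rw [add_zero] at h2
    apply h2.congr
    intro η
    have e3 := conv_poly hv M ((zz η)⁻¹)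
    calc (∑ p ∈ (range (M+1) ×ˢ range (M+1)).filter (fun p => ¬ p.1 + p.2 ≤ M),
          ((invCoeff v p.1 : ℂ) * (v p.2 : ℂ)) * ((η:ℂ) ^ M * ((zz η)⁻¹) ^ (p.1 + p.2)))
        + ((η:ℂ) ^ M * (m₂ (zz η) - ∑ j ∈ range (M+1), (v j : ℂ) * ((zz η)⁻¹) ^ j))
          * (∑ j ∈ range (M+1), (invCoeff v j : ℂ) * ((zz η)⁻¹) ^ j)
        = (η:ℂ) ^ M * ((1 + (∑ j ∈ range (M+1), (v j : ℂ) * ((zz η)⁻¹) ^ j)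
            * (∑ j ∈ range (M+1), (invCoeff v j : ℂ) * ((zz η)⁻¹) ^ j))
          + (m₂ (zz η) - ∑ j ∈ range (M+1), (v j : ℂ) * ((zz η)⁻¹) ^ j)
            * (∑ j ∈ range (M+1), (invCoeff v j : ℂ) * ((zz η)⁻¹) ^ j)) := by
          rw [e3, mul_add]
          congr 1
          · rw [Finset.mul_sum]
            apply Finset.sum_congr rfl
            intro p _
            ring
          · ring
      _ = (η:ℂ) ^ M * (1 + m₂ (zz η)
            * ∑ j ∈ range (M+1), (invCoeff v j : ℂ) * ((zz η)⁻¹) ^ j) := by ring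
  have hfin := (hinv.neg).mul hkey
  rw [mul_zero] at hfin
  apply hfin.congr'
  filter_upwards [hne, eventually_ge_atTop (1:ℝ)] with η hη1 hη
  rw [hrel η hη]
  field_simp
  ring


lemma hm_of_rep {m : ℂ → ℂ} {a b : ℝ} {ρ : Measure ℝ} (hrep : HerglotzRep m a b ρ)
    (hb : b = 0) : ∀ η : ℝ, 1 ≤ η → m (zz η) = (a : ℂ) + ∫ l, g η l ∂ρ := by
  intro η hη
  have h0 : (0:ℝ) < η := lt_of_lt_of_le one_pos hη
  rw [hrep.2.2 (zz η) (by simp [h0.ne']), hb]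
  simp only [Complex.ofReal_zero, zero_mul, add_zero]
  rfl

lemma main_dir {m₁ m₂ : ℂ → ℂ} {a₁ b₁ a₂ b₂ : ℝ} {ρ₁ ρ₂ : Measure ℝ}
    (hrep₁ : HerglotzRep m₁ a₁ b₁ ρ₁) (hrep₂ : HerglotzRep m₂ a₂ b₂ ρ₂)
    (hrel : ∀ z : ℂ, z.im ≠ 0 → m₁ z = -(m₂ z)⁻¹)
    (hlim₁ : Tendsto (fun η : ℝ => m₁ (zz η) / zz η) atTop (nhds 0))
    (hlim₂ : Tendsto (fun η : ℝ => m₂ (zz η) / zz η) atTop (nhds 0))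
    (K : ℕ) (hmom₂ : ∀ j ≤ 2 * K, Integrable (fun l : ℝ => |l| ^ j) ρ₂) :
    ∀ j ≤ 2 * K, Integrable (fun l : ℝ => |l| ^ j) ρ₁ := by
  have hb₁ := b_eq_zero hrep₁ hlim₁
  have hb₂ := b_eq_zero hrep₂ hlim₂
  have hm₁ := hm_of_rep hrep₁ hb₁
  have hm₂ := hm_of_rep hrep₂ hb₂
  have hrel' : ∀ η : ℝ, 1 ≤ η → m₁ (zz η) = -(m₂ (zz η))⁻¹ := fun η hη =>
    hrel (zz η) (by simp [(lt_of_lt_of_le one_pos hη).ne'])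
  have hexp₂ : TopExp m₂ (repCoeff a₂ ρ₂) (2 * K + 1) :=
    exp_of_moments hrep₂.2.1 hm₂ K hmom₂
  by_cases hc0 : repCoeff a₂ ρ₂ 0 = 0
  · by_cases hc1 : repCoeff a₂ ρ₂ 1 = 0
    · -- m₂ vanishes on the axis, hence so does m₁
      have hz2 := m_zero_of_coeffs hrep₂ hb₂ (mom_one (hmom₂ 0 (by omega))) hc0 hc1
      have hexp₁ : TopExp m₁ (fun _ => 0) (2 * K + 1) := by
        apply Tendsto.congr' ?_ (tendsto_const_nhds (x := (0:ℂ)))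
        filter_upwards [eventually_ge_atTop (1:ℝ)] with η hη
        rw [hrel' η hη, hz2 η hη]
        simp
      exact HN hrep₁.2.1 hm₁ K _ hexp₁
    · -- impossible: m₁ would grow linearly
      exfalso
      set c1 : ℝ := repCoeff a₂ ρ₂ 1 with hc1def
      have hT : Tendsto (fun η : ℝ => (η:ℂ) * m₂ (zz η)) atTop
          (nhds (-(Complex.I * (c1 : ℂ)))) := by
        have h1 := topExp_lower hexp₂ (N := 1) (by omega)
        have h2 := h1.sub (tendsto_const_nhds (x := Complex.I * (c1 : ℂ)))
        rw [zero_sub] at h2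
        apply h2.congr'
        filter_upwards [eventually_ge_atTop (1:ℝ)] with η hη
        have h0 : (0:ℝ) < η := lt_of_lt_of_le one_pos hη
        have hzw := eta_mul_zz_inv h0
        rw [sum_range_succ, sum_range_one]
        rw [hc0]
        push_cast
        linear_combination (-(c1 : ℂ)) * hzw
      have hzm : Tendsto (fun η : ℝ => zz η * m₂ (zz η)) atTop (nhds ((c1 : ℝ) : ℂ)) := by
        have h3 := hT.const_mul Complex.I
        have e : Complex.I * -(Complex.I * (c1 : ℂ)) = ((c1 : ℝ) : ℂ) := by
          rw [mul_neg, ← mul_assoc, Complex.I_mul_I]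
          ring
        rw [e] at h3
        apply h3.congr
        intro η
        rw [zz]
        ring
      have hcne : ((c1 : ℝ) : ℂ) ≠ 0 := by exact_mod_cast hc1
      have hfin : Tendsto (fun η : ℝ => m₁ (zz η) / zz η) atTop
          (nhds (-(((c1 : ℝ) : ℂ))⁻¹)) := by
        have h4 := (hzm.inv₀ hcne).neg
        apply h4.congr'
        filter_upwards [eventually_ge_atTop (1:ℝ)] with η hη
        rw [hrel' η hη, div_eq_mul_inv, mul_inv]
        ring
      have h5 := tendsto_nhds_unique hfin hlim₁
      rw [neg_eq_zero, inv_eq_zero] at h5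
      exact hcne h5
  · have hexp₁ := inv_topExp hc0 hexp₂ hrel'
    exact HN hrep₁.2.1 hm₁ K _ hexp₁

end Stmt11

theorem stmt_11 (m₁ m₂ : ℂ → ℂ) (h₁ : IsHerglotz m₁) (h₂ : IsHerglotz m₂)
    (a₁ b₁ a₂ b₂ : ℝ) (ρ₁ ρ₂ : Measure ℝ)
    (hrep₁ : HerglotzRep m₁ a₁ b₁ ρ₁) (hrep₂ : HerglotzRep m₂ a₂ b₂ ρ₂)
    (hrel : ∀ z : ℂ, z.im ≠ 0 → m₁ z = -(m₂ z)⁻¹)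
    (hlim₁ : Tendsto (fun η : ℝ => m₁ (Complex.I * (η : ℂ)) / (Complex.I * (η : ℂ)))
      atTop (nhds 0))
    (hlim₂ : Tendsto (fun η : ℝ => m₂ (Complex.I * (η : ℂ)) / (Complex.I * (η : ℂ)))
      atTop (nhds 0))
    (K : ℕ) :
    (∀ j ≤ 2 * K, Integrable (fun l : ℝ => |l| ^ j) ρ₂) ↔
      (∀ j ≤ 2 * K, Integrable (fun l : ℝ => |l| ^ j) ρ₁) := by
  have hrel' : ∀ z : ℂ, z.im ≠ 0 → m₂ z = -(m₁ z)⁻¹ := by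
    intro z hz
    rw [hrel z hz, inv_neg, inv_inv, neg_neg]
  constructor
  · intro h
    exact Stmt11.main_dir hrep₁ hrep₂ hrel hlim₁ hlim₂ K h
  · intro h
    exact Stmt11.main_dir hrep₂ hrep₁ hrel' hlim₂ hlim₁ K h
end
end

section
/- If m is a Herglotz–Nevanlinna function whose representing measure ρ is finite (i.e., ρ(ℝ) = s₀ < ∞ and s₀ > 0), then the function z ↦ −(∫ 1/(λ−z) dρ(λ))^{−1} − z/s₀ is a Herglotz–Nevanlinna function q satisfying q(iη)/(iη) → 0 as η → ∞. -/
open MeasureTheory Filter Complex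

variable {ρ : Measure ℝ} [IsFiniteMeasure ρ]

lemma aux_sub_ne (l : ℝ) {z : ℂ} (hz : z.im ≠ 0) : (l : ℂ) - z ≠ 0 := by
  intro h
  apply hz
  have : z = (l : ℂ) := by linear_combination -h
  simp [this]

lemma aux_norm_ge (l : ℝ) (z : ℂ) : |z.im| ≤ ‖(l : ℂ) - z‖ := by
  have h := Complex.abs_im_le_norm ((l : ℂ) - z)
  simpa using h

lemma aux_sq_le (l : ℝ) (z : ℂ) : z.im ^ 2 ≤ Complex.normSq ((l : ℂ) - z) := by
  have h2 : |z.im| ^ 2 ≤ ‖(l : ℂ) - z‖ ^ 2 :=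
    pow_le_pow_left₀ (abs_nonneg _) (aux_norm_ge l z) 2
  rw [_root_.sq_abs] at h2
  rw [← Complex.sq_norm ((l:ℂ) - z)]
  exact h2

lemma aux_integrable_inv {z : ℂ} (hz : z.im ≠ 0) :
    Integrable (fun l : ℝ => ((l : ℂ) - z)⁻¹) ρ := by
  have hc : Continuous (fun l : ℝ => ((l : ℂ) - z)⁻¹) := by
    apply Continuous.inv₀ (by continuity)
    exact fun l => aux_sub_ne l hz
  refine Integrable.mono' (integrable_const |z.im|⁻¹) hc.aestronglyMeasurable ?_
  filter_upwards with l
  rw [norm_inv]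
  exact inv_anti₀ (abs_pos.mpr hz) (aux_norm_ge l z)

lemma aux_integrable_nsq {z : ℂ} (hz : z.im ≠ 0) :
    Integrable (fun l : ℝ => (Complex.normSq ((l : ℂ) - z))⁻¹) ρ := by
  have hc : Continuous (fun l : ℝ => (Complex.normSq ((l : ℂ) - z))⁻¹) := by
    apply Continuous.inv₀ (by continuity)
    exact fun l => (Complex.normSq_pos.mpr (aux_sub_ne l hz)).ne'
  refine Integrable.mono' (integrable_const (z.im ^ 2)⁻¹) hc.aestronglyMeasurable ?_
  filter_upwards with l
  rw [Real.norm_eq_abs, _root_.abs_of_nonneg (inv_nonneg.mpr (Complex.normSq_nonneg _))]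
  exact inv_anti₀ (by positivity) (aux_sq_le l z)

lemma aux_integrable_norm_inv {z : ℂ} (hz : z.im ≠ 0) :
    Integrable (fun l : ℝ => ‖(l : ℂ) - z‖⁻¹) ρ :=
  (aux_integrable_inv (ρ := ρ) hz).norm.congr
    (Filter.Eventually.of_forall fun l => norm_inv _)

lemma aux_im_C {z : ℂ} (hz : z.im ≠ 0) :
    (∫ l : ℝ, ((l : ℂ) - z)⁻¹ ∂ρ).im
      = z.im * ∫ l : ℝ, (Complex.normSq ((l : ℂ) - z))⁻¹ ∂ρ := by
  have h0 := Complex.imCLM.integral_comp_comm (aux_integrable_inv (ρ := ρ) hz)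
  simp only [Complex.imCLM_apply] at h0
  rw [← h0, ← integral_const_mul]
  congr 1
  funext l
  rw [Complex.inv_im]
  simp [Complex.sub_im, div_eq_mul_inv]

lemma aux_G_pos {z : ℂ} (hz : z.im ≠ 0) (hρ : ρ ≠ 0) :
    0 < ∫ l : ℝ, (Complex.normSq ((l : ℂ) - z))⁻¹ ∂ρ := by
  rw [integral_pos_iff_support_of_nonneg
      (fun l => inv_nonneg.mpr (Complex.normSq_nonneg _)) (aux_integrable_nsq hz)]
  have : (Function.support fun l : ℝ => (Complex.normSq ((l : ℂ) - z))⁻¹) = Set.univ := by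
    ext l
    simp only [Function.mem_support, Set.mem_univ, iff_true]
    exact inv_ne_zero (Complex.normSq_pos.mpr (aux_sub_ne l hz)).ne'
  rw [this]
  exact Measure.measure_univ_pos.mpr hρ

lemma aux_C_ne_zero {z : ℂ} (hz : z.im ≠ 0) (hρ : ρ ≠ 0) :
    (∫ l : ℝ, ((l : ℂ) - z)⁻¹ ∂ρ) ≠ 0 := by
  intro h
  have h1 := aux_im_C (ρ := ρ) hz
  rw [h] at h1
  exact (mul_ne_zero hz (aux_G_pos hz hρ).ne') h1.symm

lemma aux_CS {z : ℂ} (hz : z.im ≠ 0) (hsp : 0 < (ρ Set.univ).toReal) :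
    (∫ l : ℝ, ‖(l : ℂ) - z‖⁻¹ ∂ρ) ^ 2
      ≤ (ρ Set.univ).toReal * ∫ l : ℝ, (Complex.normSq ((l : ℂ) - z))⁻¹ ∂ρ := by
  set s : ℝ := (ρ Set.univ).toReal with hs
  set A : ℝ := ∫ l : ℝ, ‖(l : ℂ) - z‖⁻¹ ∂ρ with hA
  set G : ℝ := ∫ l : ℝ, (Complex.normSq ((l : ℂ) - z))⁻¹ ∂ρ with hG
  set a : ℝ := A / s with ha
  have hhint := aux_integrable_norm_inv (ρ := ρ) hz
  have hgint := aux_integrable_nsq (ρ := ρ) hz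
  have key : 0 ≤ ∫ l : ℝ, (‖(l : ℂ) - z‖⁻¹ - a) ^ 2 ∂ρ :=
    integral_nonneg fun l => sq_nonneg _
  have expand : ∫ l : ℝ, (‖(l : ℂ) - z‖⁻¹ - a) ^ 2 ∂ρ = G - 2 * a * A + a ^ 2 * s := by
    have h1 : ∀ l : ℝ, (‖(l : ℂ) - z‖⁻¹ - a) ^ 2
        = (Complex.normSq ((l : ℂ) - z))⁻¹ - 2 * a * ‖(l : ℂ) - z‖⁻¹ + a ^ 2 := by
      intro l
      have h2 : (‖(l : ℂ) - z‖⁻¹) ^ 2 = (Complex.normSq ((l : ℂ) - z))⁻¹ := by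
        rw [inv_pow, Complex.sq_norm]
      rw [sub_sq, h2]
      ring
    simp_rw [h1]
    have hsub : Integrable (fun l : ℝ =>
        (Complex.normSq ((l : ℂ) - z))⁻¹ - 2 * a * ‖(l : ℂ) - z‖⁻¹) ρ :=
      hgint.sub (hhint.const_mul (2 * a))
    rw [integral_add hsub (integrable_const _),
      integral_sub hgint (hhint.const_mul (2 * a)), integral_const, integral_const_mul,
      smul_eq_mul, measureReal_def, ← hs]
    ring
  rw [expand] at key
  have h3 : 2 * a * A = 2 * (A ^ 2 / s) := by rw [ha]; field_simp
  have h4 : a ^ 2 * s = A ^ 2 / s := by rw [ha]; field_simp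
  rw [h3, h4] at key
  have h5 : A ^ 2 / s ≤ G := by linarith
  calc A ^ 2 = (A ^ 2 / s) * s := by field_simp
  _ ≤ G * s := mul_le_mul_of_nonneg_right h5 hsp.le
  _ = s * G := mul_comm _ _

lemma aux_im_bound {z : ℂ} (hz : 0 < z.im) (hρ : ρ ≠ 0)
    (hsp : 0 < (ρ Set.univ).toReal) :
    0 ≤ (-(∫ l : ℝ, ((l : ℂ) - z)⁻¹ ∂ρ)⁻¹ - z / (((ρ Set.univ).toReal : ℝ) : ℂ)).im := by
  set s : ℝ := (ρ Set.univ).toReal with hs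
  set C : ℂ := ∫ l : ℝ, ((l : ℂ) - z)⁻¹ ∂ρ with hC
  set G : ℝ := ∫ l : ℝ, (Complex.normSq ((l : ℂ) - z))⁻¹ ∂ρ with hG
  set A : ℝ := ∫ l : ℝ, ‖(l : ℂ) - z‖⁻¹ ∂ρ with hA
  have hzne : z.im ≠ 0 := hz.ne'
  have hCne : C ≠ 0 := aux_C_ne_zero hzne hρ
  have hGpos : 0 < G := aux_G_pos hzne hρ
  have hCS : A ^ 2 ≤ s * G := aux_CS hzne hsp
  have hnormSq : Complex.normSq C ≤ s * G := by
    have h7 : ‖C‖ ≤ A := by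
      refine (norm_integral_le_integral_norm _).trans_eq ?_
      congr 1
      funext l
      exact norm_inv _
    have h8 : Complex.normSq C = ‖C‖ ^ 2 := by
      rw [← Complex.sq_norm]
    nlinarith [norm_nonneg C]
  have hnsqpos : 0 < Complex.normSq C := Complex.normSq_pos.mpr hCne
  have hdiv : (z / ((s : ℝ) : ℂ)).im = z.im / s := by
    rw [Complex.div_im]
    simp [Complex.normSq_ofReal]
    field_simp
  have him : (-(C)⁻¹ - z / ((s : ℝ) : ℂ)).im = z.im * G / Complex.normSq C - z.im / s := by
    rw [Complex.sub_im, Complex.neg_im, Complex.inv_im, aux_im_C hzne, ← hG, hdiv]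
    ring
  rw [him, sub_nonneg, div_le_div_iff₀ hsp hnsqpos]
  nlinarith [hz, hGpos]

lemma aux_diffAt {z₀ : ℂ} (hz : z₀.im ≠ 0) :
    DifferentiableAt ℂ (fun z : ℂ => ∫ l : ℝ, ((l : ℂ) - z)⁻¹ ∂ρ) z₀ := by
  set ε : ℝ := |z₀.im| / 2 with hε
  have hεpos : 0 < ε := by positivity
  have him_ball : ∀ z ∈ Metric.ball z₀ ε, ε ≤ |z.im| := by
    intro z hzb
    have h1 : |z₀.im - z.im| ≤ ‖z₀ - z‖ := by
      have := Complex.abs_im_le_norm (z₀ - z)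
      simpa [Complex.sub_im] using this
    have h2 : ‖z₀ - z‖ < ε := by
      rw [Metric.mem_ball, Complex.dist_eq] at hzb
      rwa [norm_sub_rev]
    have h3 : |z₀.im| - |z.im| ≤ |z₀.im - z.im| := abs_sub_abs_le_abs_sub _ _
    have : |z₀.im| - |z.im| < ε := lt_of_le_of_lt (h3.trans h1) h2
    rw [hε] at *
    linarith
  have him_ne : ∀ z ∈ Metric.ball z₀ ε, z.im ≠ 0 := by
    intro z hzb
    have := him_ball z hzb
    intro h
    rw [h] at this
    simp at this
    linarith
  have key := hasDerivAt_integral_of_dominated_loc_of_deriv_le (μ := ρ)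
    (F := fun (z : ℂ) (l : ℝ) => ((l : ℂ) - z)⁻¹)
    (F' := fun (z : ℂ) (l : ℝ) => (((l : ℂ) - z) ^ 2)⁻¹)
    (x₀ := z₀) (bound := fun _ => (ε ^ 2)⁻¹) (Metric.ball_mem_nhds z₀ hεpos)
    ?_ (aux_integrable_inv hz) ?_ ?_ (integrable_const _) ?_
  · exact key.2.differentiableAt
  · have hopen : {z : ℂ | z.im ≠ 0} ∈ nhds z₀ :=
      (Complex.continuous_im.isOpen_preimage _ isOpen_compl_singleton).mem_nhds hz
    filter_upwards [hopen] with z hzim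
    exact (Continuous.inv₀ (by continuity) (fun l => aux_sub_ne l hzim)).aestronglyMeasurable
  · exact (Continuous.inv₀ (by continuity)
      (fun l => pow_ne_zero 2 (aux_sub_ne l hz))).aestronglyMeasurable
  · filter_upwards with l
    intro z hzb
    have h1 : ε ≤ |z.im| := him_ball z hzb
    have h2 : ε ^ 2 ≤ ‖(l : ℂ) - z‖ ^ 2 := by
      have := aux_norm_ge l z
      nlinarith [hεpos]
    rw [norm_inv, norm_pow]
    exact inv_anti₀ (by positivity) h2
  · filter_upwards with l
    intro z hzb
    have hne : (l : ℂ) - z ≠ 0 := aux_sub_ne l (him_ne z hzb)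
    have hd : HasDerivAt (fun z : ℂ => (l : ℂ) - z) (-1) z :=
      (hasDerivAt_id z).const_sub (l : ℂ)
    have := hd.fun_inv hne
    have h' : HasDerivAt (fun x : ℂ => ((l : ℂ) - x)⁻¹) (((l : ℂ) - z) ^ 2)⁻¹ z := by
      simpa [one_div] using this
    exact h'

lemma aux_conjC (z : ℂ) :
    (∫ l : ℝ, ((l : ℂ) - starRingEnd ℂ z)⁻¹ ∂ρ)
      = starRingEnd ℂ (∫ l : ℝ, ((l : ℂ) - z)⁻¹ ∂ρ) := by
  rw [← integral_conj]
  congr 1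
  funext l
  rw [map_inv₀, map_sub, Complex.conj_ofReal]

lemma aux_tendsto_etaC :
    Tendsto (fun η : ℝ => ((η : ℝ) : ℂ) * ∫ l : ℝ, ((l : ℂ) - Complex.I * (η : ℂ))⁻¹ ∂ρ)
      atTop (nhds (Complex.I * (((ρ Set.univ).toReal : ℝ) : ℂ))) := by
  have himI : ∀ η : ℝ, (Complex.I * (η : ℂ)).im = η := by intro η; simp
  have hmain : Tendsto (fun η : ℝ =>
      ∫ l : ℝ, ((η : ℂ) * ((l : ℂ) - Complex.I * (η : ℂ))⁻¹) ∂ρ)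
      atTop (nhds (∫ _ : ℝ, Complex.I ∂ρ)) := by
    apply tendsto_integral_filter_of_dominated_convergence (fun _ => (1 : ℝ))
    · filter_upwards [eventually_gt_atTop (0 : ℝ)] with η hη
      have hne : (Complex.I * (η : ℂ)).im ≠ 0 := by rw [himI]; exact hη.ne'
      exact (Continuous.mul continuous_const
        (Continuous.inv₀ (by continuity) (fun l => aux_sub_ne l hne))).aestronglyMeasurable
    · filter_upwards [eventually_gt_atTop (0 : ℝ)] with η hη
      filter_upwards with l
      have h1 : |η| ≤ ‖(l : ℂ) - Complex.I * (η : ℂ)‖ := by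
        have := aux_norm_ge l (Complex.I * (η : ℂ))
        rwa [himI] at this
      rw [norm_mul, norm_inv, Complex.norm_real, Real.norm_eq_abs]
      rw [abs_of_pos hη] at h1 ⊢
      have h2 : 0 < ‖(l : ℂ) - Complex.I * (η : ℂ)‖ := lt_of_lt_of_le hη h1
      rw [← div_eq_mul_inv, div_le_one h2]
      exact h1
    · exact integrable_const _
    · filter_upwards with l
      have h0 : Tendsto (fun η : ℝ => ((l : ℂ) / (η : ℂ) - Complex.I)) atTop
          (nhds (0 - Complex.I)) := by
        apply Tendsto.sub_const
        have h1 : Tendsto (fun η : ℝ => ((η : ℝ) : ℂ)⁻¹) atTop (nhds 0) := by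
          have h2 : Tendsto (fun η : ℝ => ((η⁻¹ : ℝ) : ℂ)) atTop (nhds ((0 : ℝ) : ℂ)) :=
            (Complex.continuous_ofReal.tendsto _).comp tendsto_inv_atTop_zero
          simpa [Complex.ofReal_inv] using h2
        have := h1.const_mul (l : ℂ)
        simpa [div_eq_mul_inv] using this
      have h3 : Tendsto (fun η : ℝ => ((l : ℂ) / (η : ℂ) - Complex.I)⁻¹) atTop
          (nhds ((0 - Complex.I)⁻¹)) := by
        apply Tendsto.inv₀ h0
        simp [Complex.ext_iff]
      have h4 : ((0 : ℂ) - Complex.I)⁻¹ = Complex.I := by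
        rw [zero_sub, inv_neg, Complex.inv_I, neg_neg]
      rw [h4] at h3
      apply h3.congr'
      filter_upwards [eventually_gt_atTop (0 : ℝ)] with η hη
      have hηne : ((η : ℝ) : ℂ) ≠ 0 := by
        simpa using hη.ne'
      have hne : (l : ℂ) - Complex.I * (η : ℂ) ≠ 0 := by
        apply aux_sub_ne
        rw [himI]; exact hη.ne'
      have hrew : ((l : ℂ) / (η : ℂ) - Complex.I)
          = ((l : ℂ) - Complex.I * (η : ℂ)) / (η : ℂ) := by
        field_simp
      rw [hrew, inv_div, div_eq_mul_inv]
  have heq : (fun η : ℝ =>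
      ((η : ℝ) : ℂ) * ∫ l : ℝ, ((l : ℂ) - Complex.I * (η : ℂ))⁻¹ ∂ρ)
      = fun η : ℝ => ∫ l : ℝ, ((η : ℂ) * ((l : ℂ) - Complex.I * (η : ℂ))⁻¹) ∂ρ := by
    funext η
    rw [integral_const_mul]
  rw [heq]
  convert hmain using 2
  rw [integral_const, measureReal_def]
  rw [Complex.real_smul]
  ring

theorem stmt_13 (ρ : Measure ℝ) [IsFiniteMeasure ρ]
    (s₀ : ℝ) (hs₀ : s₀ = (ρ Set.univ).toReal) (hpos : 0 < s₀) :
    IsHerglotz (fun z : ℂ => -(∫ l : ℝ, ((l : ℂ) - z)⁻¹ ∂ρ)⁻¹ - z / (s₀ : ℂ)) ∧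
    Tendsto (fun η : ℝ =>
        (-(∫ l : ℝ, ((l : ℂ) - Complex.I * (η : ℂ))⁻¹ ∂ρ)⁻¹ -
          (Complex.I * (η : ℂ)) / (s₀ : ℂ)) / (Complex.I * (η : ℂ)))
      atTop (nhds 0) := by
  have hsp : 0 < (ρ Set.univ).toReal := hs₀ ▸ hpos
  have hρ : ρ ≠ 0 := by
    intro h
    rw [h] at hsp
    simp at hsp
  have hs₀ne : (s₀ : ℂ) ≠ 0 := by
    exact_mod_cast hpos.ne'
  constructor
  · refine ⟨?_, ?_, ?_⟩
    · intro z hz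
      have hz' : z.im ≠ 0 := hz
      have hd : DifferentiableAt ℂ
          (fun z : ℂ => -(∫ l : ℝ, ((l : ℂ) - z)⁻¹ ∂ρ)⁻¹ - z / (s₀ : ℂ)) z :=
        (((aux_diffAt hz').inv (aux_C_ne_zero hz' hρ)).neg).sub
          (differentiableAt_id.div_const _)
      exact hd.differentiableWithinAt
    · intro z hz
      have h := aux_im_bound (ρ := ρ) hz hρ hsp
      rw [← hs₀] at h
      exact h
    · intro z hz
      simp only
      rw [aux_conjC, map_sub, map_neg, map_inv₀, map_div₀, Complex.conj_ofReal]
  · have h1 : Tendsto (fun η : ℝ => Complex.I *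
        (((η : ℝ) : ℂ) * ∫ l : ℝ, ((l : ℂ) - Complex.I * (η : ℂ))⁻¹ ∂ρ))
        atTop (nhds (Complex.I * (Complex.I * ((s₀ : ℝ) : ℂ)))) := by
      have h0 := aux_tendsto_etaC (ρ := ρ)
      rw [← hs₀] at h0
      exact h0.const_mul Complex.I
    have hIIs : Complex.I * (Complex.I * ((s₀ : ℝ) : ℂ)) = -((s₀ : ℝ) : ℂ) := by
      rw [← mul_assoc, Complex.I_mul_I]
      ring
    have hne : Complex.I * (Complex.I * ((s₀ : ℝ) : ℂ)) ≠ 0 := by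
      rw [hIIs]
      simpa using hs₀ne
    have h2 : Tendsto (fun η : ℝ =>
        -(Complex.I * (((η : ℝ) : ℂ) * ∫ l : ℝ, ((l : ℂ) - Complex.I * (η : ℂ))⁻¹ ∂ρ))⁻¹
          - 1 / ((s₀ : ℝ) : ℂ))
        atTop (nhds (-(Complex.I * (Complex.I * ((s₀ : ℝ) : ℂ)))⁻¹ - 1 / ((s₀ : ℝ) : ℂ))) :=
      ((h1.inv₀ hne).neg).sub_const _
    have hlim : -(Complex.I * (Complex.I * ((s₀ : ℝ) : ℂ)))⁻¹ - 1 / ((s₀ : ℝ) : ℂ) = 0 := by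
      rw [hIIs, inv_neg, neg_neg, one_div, sub_self]
    rw [hlim] at h2
    apply h2.congr'
    filter_upwards [eventually_gt_atTop (0 : ℝ)] with η hη
    have hηne : ((η : ℝ) : ℂ) ≠ 0 := by simpa using hη.ne'
    have hIη : Complex.I * ((η : ℝ) : ℂ) ≠ 0 := mul_ne_zero Complex.I_ne_zero hηne
    have himI : (Complex.I * ((η : ℝ) : ℂ)).im ≠ 0 := by
      simpa using hη.ne'
    have hDne : (∫ l : ℝ, ((l : ℂ) - Complex.I * (η : ℂ))⁻¹ ∂ρ) ≠ 0 :=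
      aux_C_ne_zero himI hρ
    set D : ℂ := ∫ l : ℝ, ((l : ℂ) - Complex.I * (η : ℂ))⁻¹ ∂ρ with hD
    field_simp
end

section
/- Let q̃₁, q̃₂ be Herglotz–Nevanlinna functions with (1/q̃₁(iη) − 1/q̃₂(iη))/(iη) → 0 as η → ∞, let l_N > 0, and define q_{i,N} by 1/q_{i,N}(z) = −l_N z + 1/q̃_i(z). If additionally lim_{η→∞} q̃₁(iη)/(iη) = lim_{η→∞} q̃₂(iη)/(iη) = β, set j = 1 if β > 0 and j = 0 otherwise; then q_{1,N}(iη) − q_{2,N}(iη) = o(η^{−1−2j}) as η → ∞. -/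
open Filter Complex Asymptotics

lemma herg_inv_im_nonpos {m : ℂ → ℂ} (hm : IsHerglotz m) {η : ℝ} (hη : 0 < η) :
    ((m (Complex.I * η))⁻¹).im ≤ 0 := by
  have h1 : (0:ℝ) < (Complex.I * η).im := by simp [hη]
  have h2 := hm.2.1 _ h1
  rw [Complex.inv_im]
  apply div_nonpos_of_nonpos_of_nonneg (by linarith) (Complex.normSq_nonneg _)

lemma q_bound {m q : ℂ → ℂ} (hm : IsHerglotz m) {lN : ℝ} (hlN : 0 < lN)
    (hdef : ∀ z : ℂ, z.im ≠ 0 → (q z)⁻¹ = -(lN : ℂ) * z + (m z)⁻¹)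
    {η : ℝ} (hη : 0 < η) :
    q (Complex.I * η) ≠ 0 ∧ ‖q (Complex.I * η)‖ ≤ (lN * η)⁻¹ := by
  have him : (Complex.I * (η:ℂ)).im ≠ 0 := by simp [hη.ne']
  have hd := hdef (Complex.I * η) him
  have himw : ((q (Complex.I * η))⁻¹).im ≤ -(lN * η) := by
    have h3 : (-(lN:ℂ) * (Complex.I*(η:ℂ))).im = -(lN*η) := by simp
    have := herg_inv_im_nonpos hm hη
    rw [hd, Complex.add_im, h3]
    linarith
  have hw0 : (q (Complex.I * η))⁻¹ ≠ 0 := by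
    intro h
    rw [h] at himw
    simp at himw
    nlinarith
  have hq0 : q (Complex.I * η) ≠ 0 := by
    intro h; apply hw0; rw [h]; simp
  refine ⟨hq0, ?_⟩
  have hnorm : lN * η ≤ ‖(q (Complex.I * η))⁻¹‖ := by
    calc lN * η ≤ |((q (Complex.I * η))⁻¹).im| := by
          rw [abs_of_nonpos (by nlinarith)]; linarith
      _ ≤ ‖(q (Complex.I * η))⁻¹‖ := Complex.abs_im_le_norm _
  rw [norm_inv] at hnorm
  have := inv_anti₀ (by positivity : (0:ℝ) < lN * η) hnorm
  rwa [inv_inv] at this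

theorem stmt_19 (qt₁ qt₂ q₁ q₂ : ℂ → ℂ)
    (hqt₁ : IsHerglotz qt₁) (hqt₂ : IsHerglotz qt₂)
    (hq₁ : IsHerglotz q₁) (hq₂ : IsHerglotz q₂)
    (lN : ℝ) (hlN : 0 < lN)
    (hdef₁ : ∀ z : ℂ, z.im ≠ 0 → (q₁ z)⁻¹ = -(lN : ℂ) * z + (qt₁ z)⁻¹)
    (hdef₂ : ∀ z : ℂ, z.im ≠ 0 → (q₂ z)⁻¹ = -(lN : ℂ) * z + (qt₂ z)⁻¹)
    (hclose : Tendsto (fun η : ℝ =>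
        ((qt₁ (Complex.I * (η : ℂ)))⁻¹ - (qt₂ (Complex.I * (η : ℂ)))⁻¹) /
          (Complex.I * (η : ℂ))) atTop (nhds 0))
    (β : ℝ)
    (hβ₁ : Tendsto (fun η : ℝ =>
        qt₁ (Complex.I * (η : ℂ)) / (Complex.I * (η : ℂ))) atTop (nhds (β : ℂ)))
    (hβ₂ : Tendsto (fun η : ℝ =>
        qt₂ (Complex.I * (η : ℂ)) / (Complex.I * (η : ℂ))) atTop (nhds (β : ℂ))) :
    (fun η : ℝ => q₁ (Complex.I * (η : ℂ)) - q₂ (Complex.I * (η : ℂ)))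
      =o[atTop] fun η : ℝ => η ^ (-1 - 2 * (if 0 < β then (1 : ℝ) else 0)) := by
  -- big-O bounds for q₁, q₂
  have hbig : ∀ (m q : ℂ → ℂ), IsHerglotz m →
      (∀ z : ℂ, z.im ≠ 0 → (q z)⁻¹ = -(lN : ℂ) * z + (m z)⁻¹) →
      (fun η : ℝ => q (Complex.I * η)) =O[atTop] fun η : ℝ => η⁻¹ := by
    intro m q hm hdef
    rw [isBigO_iff]
    refine ⟨lN⁻¹, ?_⟩
    filter_upwards [eventually_gt_atTop 0] with η hη
    have h := (q_bound hm hlN hdef hη).2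
    rw [Real.norm_eq_abs, abs_inv, abs_of_pos hη]
    calc ‖q (Complex.I * η)‖ ≤ (lN * η)⁻¹ := h
      _ = lN⁻¹ * η⁻¹ := by rw [mul_inv]
  have hO₁ := hbig qt₁ q₁ hqt₁ hdef₁
  have hO₂ := hbig qt₂ q₂ hqt₂ hdef₂
  have hqprod := hO₁.mul hO₂
  -- eventual identity
  have hfeq : (fun η : ℝ => q₁ (Complex.I * η) - q₂ (Complex.I * η)) =ᶠ[atTop]
      fun η : ℝ => ((qt₂ (Complex.I * η))⁻¹ - (qt₁ (Complex.I * η))⁻¹) *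
        (q₁ (Complex.I * η) * q₂ (Complex.I * η)) := by
    filter_upwards [eventually_gt_atTop 0] with η hη
    have h1 := (q_bound hqt₁ hlN hdef₁ hη).1
    have h2 := (q_bound hqt₂ hlN hdef₂ hη).1
    have him : (Complex.I * (η:ℂ)).im ≠ 0 := by simp [hη.ne']
    have key : (qt₂ (Complex.I * η))⁻¹ - (qt₁ (Complex.I * η))⁻¹
        = (q₂ (Complex.I * η))⁻¹ - (q₁ (Complex.I * η))⁻¹ := by
      rw [hdef₁ _ him, hdef₂ _ him]; ring
    rw [key]
    field_simp
  have hI0 : ∀ η : ℝ, 0 < η → (Complex.I * (η:ℂ)) ≠ 0 := by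
    intro η hη
    simp [Complex.I_ne_zero, hη.ne']
  by_cases hβ : 0 < β
  · simp only [if_pos hβ]
    have hβne : (β:ℂ) ≠ 0 := by exact_mod_cast hβ.ne'
    have hg := (hβ₂.inv₀ hβne).sub (hβ₁.inv₀ hβne)
    rw [sub_self] at hg
    have hDlittle : (fun η : ℝ => (qt₂ (Complex.I * η) / (Complex.I * η))⁻¹
        - (qt₁ (Complex.I * η) / (Complex.I * η))⁻¹) =o[atTop] (fun _ : ℝ => (1:ℝ)) :=
      (isLittleO_one_iff ℝ).mpr hg
    have hinvO : (fun η : ℝ => (Complex.I * (η:ℂ))⁻¹) =O[atTop] fun η : ℝ => η⁻¹ := by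
      apply isBigO_of_le
      intro η
      simp [norm_inv]
    have hD : (fun η : ℝ => (qt₂ (Complex.I * η))⁻¹ - (qt₁ (Complex.I * η))⁻¹)
        =o[atTop] fun η : ℝ => η⁻¹ := by
      have h := hDlittle.mul_isBigO hinvO
      refine h.congr' ?_ (by filter_upwards with η; rw [one_mul])
      filter_upwards [eventually_gt_atTop 0] with η hη
      have hI := hI0 η hη
      have hη' : (η:ℂ) ≠ 0 := by exact_mod_cast hη.ne'
      field_simp
    have main := hD.mul_isBigO hqprod
    refine main.congr' hfeq.symm ?_
    filter_upwards [eventually_gt_atTop 0] with η hη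
    rw [show (-1 - 2 * 1 : ℝ) = -3 by norm_num, Real.rpow_neg hη.le,
      show (3:ℝ) = ((3:ℕ):ℝ) by norm_num, Real.rpow_natCast]
    field_simp
  · simp only [if_neg hβ]
    have hneg : Tendsto (fun η : ℝ => -(((qt₁ (Complex.I * (η : ℂ)))⁻¹
        - (qt₂ (Complex.I * (η : ℂ)))⁻¹) / (Complex.I * (η : ℂ)))) atTop (nhds 0) := by
      have := hclose.neg; rwa [neg_zero] at this
    have hDlittle := (isLittleO_one_iff ℝ).mpr hneg
    have hIO : (fun η : ℝ => Complex.I * (η:ℂ)) =O[atTop] fun η : ℝ => η := by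
      apply isBigO_of_le
      intro η
      simp
    have hD : (fun η : ℝ => (qt₂ (Complex.I * η))⁻¹ - (qt₁ (Complex.I * η))⁻¹)
        =o[atTop] fun η : ℝ => η := by
      have h := hDlittle.mul_isBigO hIO
      refine h.congr' ?_ (by filter_upwards with η; rw [one_mul])
      filter_upwards [eventually_gt_atTop 0] with η hη
      have hI := hI0 η hη
      have hη' : (η:ℂ) ≠ 0 := by exact_mod_cast hη.ne'
      field_simp
      ring
    have main := hD.mul_isBigO hqprod
    refine main.congr' hfeq.symm ?_
    filter_upwards [eventually_gt_atTop 0] with η hη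
    rw [show (-1 - 2 * 0 : ℝ) = -1 by norm_num, Real.rpow_neg_one]
    field_simp
end
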